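/- arXiv:1101.3503 — 4 statements merged into one kernel-verified Lean document; each statement's English description precedes it below -/
import Mathlib

section
/- Let 0 < G₀ ≤ G₁ ≤ 2G₀, η₀ > 0, and let G : (0,1) → ℝ be C¹ with G₀ ≤ G(x) ≤ G₁ and |G'(x)| ≤ η₀ for all x ∈ (0,1). Let O = (0,1) × (0,G₁), let O^G = {(x₁,x₂) : x₁ ∈ (0,1), 0 < x₂ < G(x₁)}, and let φ be a C¹ function on an open neighborhood of the closure of O^G. Define Pφ on O by Pφ(x₁,x₂) = φ(x₁,x₂) if x₂ < G(x₁) and Pφ(x₁,x₂) = φ(x₁, 2G(x₁) − x₂) if G(x₁) ≤ x₂ < G₁. Then for every p ∈ [1,∞): (i) ∫_O |∂₂(Pφ)|^p dx ≤ 2 ∫_{O^G} |∂₂φ|^p dx, and (ii) ∫_O |∂₁(Pφ)|^p dx ≤ 4^p ( ∫_{O^G} |∂₁φ|^p dx + η₀^p ∫_{O^G} |∂₂φ|^p dx ). -/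
open MeasureTheory Set

/-- First partial derivative of a function of two real variables. -/
noncomputable def pd1 (f : ℝ × ℝ → ℝ) (x : ℝ × ℝ) : ℝ := fderiv ℝ f x (1, 0)

/-- Second partial derivative of a function of two real variables. -/
noncomputable def pd2 (f : ℝ × ℝ → ℝ) (x : ℝ × ℝ) : ℝ := fderiv ℝ f x (0, 1)

section Aux

variable {G : ℝ → ℝ} {G₀ G₁ : ℝ}

lemma reflKey_isOpen (hGc : ContinuousOn G (Ioo (0:ℝ) 1)) :
    IsOpen {x : ℝ × ℝ | x.1 ∈ Ioo (0:ℝ) 1 ∧ x.2 ∈ Ioo 0 (G x.1)} := by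
  rw [isOpen_iff_mem_nhds]
  rintro ⟨a, b⟩ ⟨ha, hb⟩
  have hca : ContinuousAt (fun x : ℝ × ℝ => G x.1 - x.2) (a, b) := by
    have hGa : ContinuousAt G a := hGc.continuousAt (Ioo_mem_nhds ha.1 ha.2)
    exact (hGa.comp continuousAt_fst).sub continuousAt_snd
  have h1 : {x : ℝ × ℝ | 0 < G x.1 - x.2} ∈ nhds (a, b) := by
    have : (0:ℝ) < G a - b := by
      have := hb.2
      simp only [mem_Ioo] at hb
      linarith [hb.2]
    exact hca.preimage_mem_nhds (Ioi_mem_nhds this)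
  have h2 : (Ioo (0:ℝ) 1 ×ˢ Ioi (0:ℝ)) ∈ nhds (a, b) :=
    (isOpen_Ioo.prod isOpen_Ioi).mem_nhds ⟨ha, hb.1⟩
  filter_upwards [h1, h2] with x hx1 hx2
  exact ⟨hx2.1, hx2.2, by simpa using sub_pos.mp hx1⟩

/-- Key substitution estimate: the integral of `g ∘ R` over the reflected region
`O \ O^G` is at most the integral of `g` over `O^G`. -/
lemma reflKey (hG₀pos : 0 < G₀) (hG₁2 : G₁ ≤ 2 * G₀)
    (hGc : ContinuousOn G (Ioo (0:ℝ) 1))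
    (hGlb : ∀ x ∈ Ioo (0:ℝ) 1, G₀ ≤ G x) (hGub : ∀ x ∈ Ioo (0:ℝ) 1, G x ≤ G₁)
    (g : ℝ × ℝ → ENNReal) (hg : Measurable g) :
    ∫⁻ x in (Ioo (0:ℝ) 1 ×ˢ Ioo (0:ℝ) G₁) \
        {x : ℝ × ℝ | x.1 ∈ Ioo (0:ℝ) 1 ∧ x.2 ∈ Ioo 0 (G x.1)},
      g (x.1, 2 * G x.1 - x.2)
      ≤ ∫⁻ x in {x : ℝ × ℝ | x.1 ∈ Ioo (0:ℝ) 1 ∧ x.2 ∈ Ioo 0 (G x.1)}, g x := by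
  set L : Set (ℝ × ℝ) := {x : ℝ × ℝ | x.1 ∈ Ioo (0:ℝ) 1 ∧ x.2 ∈ Ioo 0 (G x.1)} with hL
  set U : Set (ℝ × ℝ) := (Ioo (0:ℝ) 1 ×ˢ Ioo (0:ℝ) G₁) \ L with hUdef
  have hLopen : IsOpen L := reflKey_isOpen hGc
  have hLmeas : MeasurableSet L := hLopen.measurableSet
  have hU : MeasurableSet U :=
    ((measurableSet_Ioo.prod measurableSet_Ioo)).diff hLmeas
  have hU1 : ∀ x ∈ U, x.1 ∈ Ioo (0:ℝ) 1 := fun x hx => hx.1.1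
  -- continuity of the reflection on U
  have hRcont : ContinuousOn (fun x : ℝ × ℝ => (x.1, 2 * G x.1 - x.2)) U := by
    apply ContinuousOn.prodMk continuousOn_fst
    exact (continuousOn_const.mul (hGc.comp continuousOn_fst hU1)).sub continuousOn_snd
  set F : ℝ × ℝ → ENNReal := U.indicator (fun x => g (x.1, 2 * G x.1 - x.2)) with hF
  have hFm : AEMeasurable F (volume : Measure (ℝ × ℝ)) :=
    (aemeasurable_indicator_iff hU).mpr (hg.comp_aemeasurable (hRcont.aemeasurable hU))
  have hslice : ∀ a ∈ Ioo (0:ℝ) 1, ∀ b : ℝ, ((a, b) ∈ U ↔ b ∈ Ico (G a) G₁) := by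
    intro a ha b
    constructor
    · rintro ⟨⟨-, hb⟩, hnb⟩
      refine ⟨?_, hb.2⟩
      by_contra hlt
      push_neg at hlt
      exact hnb ⟨ha, hb.1, hlt⟩
    · rintro ⟨h1, h2⟩
      have hGa : G₀ ≤ G a := hGlb a ha
      refine ⟨⟨ha, lt_of_lt_of_le (lt_of_lt_of_le hG₀pos hGa) h1, h2⟩, ?_⟩
      rintro ⟨-, -, hb2⟩
      exact absurd hb2 (not_lt.mpr h1)
  calc
    ∫⁻ x in U, g (x.1, 2 * G x.1 - x.2) = ∫⁻ x, F x := (lintegral_indicator hU _).symm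
    _ = ∫⁻ a, ∫⁻ b, F (a, b) := by
        rw [Measure.volume_eq_prod] at hFm ⊢
        exact lintegral_prod F hFm
    _ ≤ ∫⁻ a, ∫⁻ b, L.indicator g (a, b) := by
        apply lintegral_mono
        intro a
        by_cases ha : a ∈ Ioo (0:ℝ) 1
        · have hGa₀ : G₀ ≤ G a := hGlb a ha
          have hGa₁ : G a ≤ G₁ := hGub a ha
          calc
            ∫⁻ b, F (a, b) = ∫⁻ b in Ico (G a) G₁, g (a, 2 * G a - b) := by
                rw [← lintegral_indicator measurableSet_Ico]
                refine lintegral_congr fun b => ?_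
                simp only [hF, Set.indicator_apply]
                rw [if_congr (hslice a ha b) rfl rfl]
            _ = ∫⁻ t in (fun b => 2 * G a - b) '' Ico (G a) G₁, g (a, t) := by
                exact (Measure.measurePreserving_sub_left volume
                  (2 * G a)).setLIntegral_comp_emb
                  (MeasurableEquiv.subLeft (2 * G a)).measurableEmbedding
                  (fun t => g (a, t)) _
            _ = ∫⁻ t in Ioc (2 * G a - G₁) (G a), g (a, t) := by
                rw [Set.image_const_sub_Ico]
                have h : 2 * G a - G a = G a := by ring
                rw [h]
            _ = ∫⁻ t in Ioo (2 * G a - G₁) (G a), g (a, t) :=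
                (setLIntegral_congr Ioo_ae_eq_Ioc).symm
            _ ≤ ∫⁻ t in Ioo 0 (G a), g (a, t) := by
                apply lintegral_mono_set
                apply Ioo_subset_Ioo_left
                linarith
            _ = ∫⁻ b, L.indicator g (a, b) := by
                rw [← lintegral_indicator measurableSet_Ioo]
                refine lintegral_congr fun b => ?_
                simp only [Set.indicator_apply]
                have : b ∈ Ioo 0 (G a) ↔ (a, b) ∈ L := by
                  constructor
                  · exact fun h => ⟨ha, h⟩
                  · exact fun h => h.2
                rw [if_congr this rfl rfl]
        · have hz : ∀ b : ℝ, F (a, b) = 0 := by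
            intro b
            apply Set.indicator_of_notMem
            exact fun h => ha (hU1 _ h)
          simp [hz]
    _ = ∫⁻ x, L.indicator g x := by
        rw [Measure.volume_eq_prod]
        exact (lintegral_prod _ (hg.indicator hLmeas).aemeasurable).symm
    _ = ∫⁻ x in L, g x := lintegral_indicator hLmeas _

end Aux

/-- **Gradient bound for the extension-by-reflection operator** (Lemma 2.1 of the paper):
for a `C¹` profile `G` with `0 < G₀ ≤ G ≤ G₁ ≤ 2G₀` and `|G'| ≤ η₀` on `(0,1)`, and `φ`
of class `C¹` on a neighborhood of the closure of `O^G`, the reflected extension `Pφ`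
(whose partial derivatives on the reflected region are
`∂₁(Pφ)(x₁,x₂) = ∂₁φ(x₁,2G(x₁)−x₂) + 2G'(x₁)∂₂φ(x₁,2G(x₁)−x₂)` and
`∂₂(Pφ)(x₁,x₂) = −∂₂φ(x₁,2G(x₁)−x₂)`) satisfies, for all `p ∈ [1,∞)`,
`∫_O |∂₂(Pφ)|^p ≤ 2 ∫_{O^G} |∂₂φ|^p` and
`∫_O |∂₁(Pφ)|^p ≤ 4^p (∫_{O^G} |∂₁φ|^p + η₀^p ∫_{O^G} |∂₂φ|^p)`. -/
theorem gradient_bound_reflection_extension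
    (G₀ G₁ η₀ : ℝ) (hG₀pos : 0 < G₀) (hG₀₁ : G₀ ≤ G₁) (hG₁2 : G₁ ≤ 2 * G₀) (hη₀ : 0 < η₀)
    (G : ℝ → ℝ) (hG : ContDiffOn ℝ 1 G (Ioo (0:ℝ) 1))
    (hGlb : ∀ x ∈ Ioo (0:ℝ) 1, G₀ ≤ G x) (hGub : ∀ x ∈ Ioo (0:ℝ) 1, G x ≤ G₁)
    (hG' : ∀ x ∈ Ioo (0:ℝ) 1, |deriv G x| ≤ η₀)
    (O : Set (ℝ × ℝ)) (hO : O = Ioo (0:ℝ) 1 ×ˢ Ioo (0:ℝ) G₁)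
    (OG : Set (ℝ × ℝ)) (hOG : OG = {x : ℝ × ℝ | x.1 ∈ Ioo (0:ℝ) 1 ∧ x.2 ∈ Ioo 0 (G x.1)})
    (φ : ℝ × ℝ → ℝ) (V : Set (ℝ × ℝ)) (hV : IsOpen V) (hVOG : closure OG ⊆ V)
    (hφ : ContDiffOn ℝ 1 φ V)
    (D1P D2P : ℝ × ℝ → ℝ)
    (hD1P : ∀ x : ℝ × ℝ, D1P x =
      if x.2 < G x.1 then pd1 φ x
      else pd1 φ (x.1, 2 * G x.1 - x.2) + 2 * deriv G x.1 * pd2 φ (x.1, 2 * G x.1 - x.2))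
    (hD2P : ∀ x : ℝ × ℝ, D2P x =
      if x.2 < G x.1 then pd2 φ x else -(pd2 φ (x.1, 2 * G x.1 - x.2)))
    (p : ℝ) (hp : 1 ≤ p) :
    (∫⁻ x in O, ENNReal.ofReal (|D2P x| ^ p) ≤ 2 * ∫⁻ x in OG, ENNReal.ofReal (|pd2 φ x| ^ p)) ∧
    (∫⁻ x in O, ENNReal.ofReal (|D1P x| ^ p) ≤ ENNReal.ofReal (4 ^ p) *
      ((∫⁻ x in OG, ENNReal.ofReal (|pd1 φ x| ^ p)) +
        ENNReal.ofReal (η₀ ^ p) * ∫⁻ x in OG, ENNReal.ofReal (|pd2 φ x| ^ p))) := by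
  subst hO hOG
  have hp0 : (0:ℝ) ≤ p := le_trans zero_le_one hp
  set L : Set (ℝ × ℝ) := {x : ℝ × ℝ | x.1 ∈ Ioo (0:ℝ) 1 ∧ x.2 ∈ Ioo 0 (G x.1)} with hL
  set O : Set (ℝ × ℝ) := Ioo (0:ℝ) 1 ×ˢ Ioo (0:ℝ) G₁ with hOdef
  set U : Set (ℝ × ℝ) := O \ L with hUdef
  have hGc : ContinuousOn G (Ioo (0:ℝ) 1) := hG.continuousOn
  have hLopen : IsOpen L := reflKey_isOpen hGc
  have hLmeas : MeasurableSet L := hLopen.measurableSet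
  have hOmeas : MeasurableSet O := measurableSet_Ioo.prod measurableSet_Ioo
  have hUmeas : MeasurableSet U := hOmeas.diff hLmeas
  have hLO : L ⊆ O := by
    rintro x ⟨hx1, hx2⟩
    exact ⟨hx1, hx2.1, lt_of_lt_of_le hx2.2 (hGub _ hx1)⟩
  have hsplit : O = L ∪ U := (Set.union_diff_cancel hLO).symm
  have hdisj : Disjoint L U := disjoint_sdiff_self_right
  -- facts about points of U
  have hUfacts : ∀ x ∈ U, x.1 ∈ Ioo (0:ℝ) 1 ∧ ¬(x.2 < G x.1) := by
    rintro x ⟨⟨hx1, hx2⟩, hnx⟩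
    refine ⟨hx1, fun hlt => hnx ⟨hx1, hx2.1, hlt⟩⟩
  -- measurable integrands
  have m1 : Measurable (pd1 φ) := measurable_fderiv_apply_const ℝ φ (1, 0)
  have m2 : Measurable (pd2 φ) := measurable_fderiv_apply_const ℝ φ (0, 1)
  set g1 : ℝ × ℝ → ENNReal := fun y => ENNReal.ofReal (|pd1 φ y| ^ p) with hg1
  set g2 : ℝ × ℝ → ENNReal := fun y => ENNReal.ofReal (|pd2 φ y| ^ p) with hg2
  have mg1 : Measurable g1 := (m1.abs.pow_const p).ennreal_ofReal
  have mg2 : Measurable g2 := (m2.abs.pow_const p).ennreal_ofReal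
  have key1 := reflKey hG₀pos hG₁2 hGc hGlb hGub g1 mg1
  have key2 := reflKey hG₀pos hG₁2 hGc hGlb hGub g2 mg2
  -- the value of the extension on L
  have hLval2 : ∫⁻ x in L, ENNReal.ofReal (|D2P x| ^ p) = ∫⁻ x in L, g2 x := by
    refine setLIntegral_congr_fun hLmeas (fun x hx => ?_)
    rw [hD2P x, if_pos hx.2.2]
  have hLval1 : ∫⁻ x in L, ENNReal.ofReal (|D1P x| ^ p) = ∫⁻ x in L, g1 x := by
    refine setLIntegral_congr_fun hLmeas (fun x hx => ?_)
    rw [hD1P x, if_pos hx.2.2]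
  constructor
  · -- second partial derivative
    have hUval : ∫⁻ x in U, ENNReal.ofReal (|D2P x| ^ p)
        = ∫⁻ x in U, g2 (x.1, 2 * G x.1 - x.2) := by
      refine setLIntegral_congr_fun hUmeas (fun x hx => ?_)
      rw [hD2P x, if_neg (hUfacts x hx).2, abs_neg]
    rw [hsplit, lintegral_union hUmeas hdisj, hLval2, hUval]
    calc (∫⁻ x in L, g2 x) + ∫⁻ x in U, g2 (x.1, 2 * G x.1 - x.2)
        ≤ (∫⁻ x in L, g2 x) + ∫⁻ x in L, g2 x := add_le_add_right key2 _
      _ = 2 * ∫⁻ x in L, g2 x := (two_mul _).symm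
  · -- first partial derivative
    -- AE-measurability of the composed integrands on U
    have hU1 : ∀ x ∈ U, x.1 ∈ Ioo (0:ℝ) 1 := fun x hx => (hUfacts x hx).1
    have hRcont : ContinuousOn (fun x : ℝ × ℝ => (x.1, 2 * G x.1 - x.2)) U := by
      apply ContinuousOn.prodMk continuousOn_fst
      exact (continuousOn_const.mul (hGc.comp continuousOn_fst hU1)).sub continuousOn_snd
    have hRaem : AEMeasurable (fun x : ℝ × ℝ => (x.1, 2 * G x.1 - x.2))
        (volume.restrict U) := hRcont.aemeasurable hUmeas
    have haem1 : AEMeasurable (fun x : ℝ × ℝ => g1 (x.1, 2 * G x.1 - x.2))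
        (volume.restrict U) := mg1.comp_aemeasurable hRaem
    -- pointwise bound on U
    set c1 : ENNReal := ENNReal.ofReal (2 ^ p) with hc1
    set c2 : ENNReal := ENNReal.ofReal (4 ^ p * η₀ ^ p) with hc2
    have hptwise : ∀ x ∈ U, ENNReal.ofReal (|D1P x| ^ p)
        ≤ c1 * g1 (x.1, 2 * G x.1 - x.2) + c2 * g2 (x.1, 2 * G x.1 - x.2) := by
      intro x hx
      obtain ⟨hx1, hx2⟩ := hUfacts x hx
      rw [hD1P x, if_neg hx2]
      set A : ℝ := |pd1 φ (x.1, 2 * G x.1 - x.2)| with hA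
      set B : ℝ := 2 * η₀ * |pd2 φ (x.1, 2 * G x.1 - x.2)| with hB
      have hA0 : 0 ≤ A := abs_nonneg _
      have hB0 : 0 ≤ B := by positivity
      have habs : |pd1 φ (x.1, 2 * G x.1 - x.2)
          + 2 * deriv G x.1 * pd2 φ (x.1, 2 * G x.1 - x.2)| ≤ A + B := by
        refine le_trans (abs_add_le _ _) (add_le_add le_rfl ?_)
        rw [abs_mul, hB]
        have h1 : |2 * deriv G x.1| ≤ 2 * η₀ := by
          rw [abs_mul, abs_two]
          exact mul_le_mul_of_nonneg_left (hG' _ hx1) (by norm_num)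
        exact mul_le_mul_of_nonneg_right h1 (abs_nonneg _)
      have hbound : |pd1 φ (x.1, 2 * G x.1 - x.2)
          + 2 * deriv G x.1 * pd2 φ (x.1, 2 * G x.1 - x.2)| ^ p
          ≤ 2 ^ p * (A ^ p + B ^ p) := by
        calc |pd1 φ (x.1, 2 * G x.1 - x.2)
              + 2 * deriv G x.1 * pd2 φ (x.1, 2 * G x.1 - x.2)| ^ p
            ≤ (A + B) ^ p := Real.rpow_le_rpow (abs_nonneg _) habs hp0
          _ ≤ (2 * max A B) ^ p := by
              refine Real.rpow_le_rpow (by positivity) ?_ hp0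
              rcases max_cases A B with ⟨hm, _⟩ | ⟨hm, hle⟩ <;> rw [hm] <;> nlinarith
          _ = 2 ^ p * (max A B) ^ p := Real.mul_rpow (by norm_num) (le_max_of_le_left hA0)
          _ ≤ 2 ^ p * (A ^ p + B ^ p) := by
              refine mul_le_mul_of_nonneg_left ?_ (by positivity)
              rcases max_cases A B with ⟨hm, _⟩ | ⟨hm, _⟩ <;> rw [hm]
              · exact le_add_of_nonneg_right (Real.rpow_nonneg hB0 p)
              · exact le_add_of_nonneg_left (Real.rpow_nonneg hA0 p)
      calc ENNReal.ofReal (|pd1 φ (x.1, 2 * G x.1 - x.2)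
              + 2 * deriv G x.1 * pd2 φ (x.1, 2 * G x.1 - x.2)| ^ p)
          ≤ ENNReal.ofReal (2 ^ p * (A ^ p + B ^ p)) := ENNReal.ofReal_le_ofReal hbound
        _ = c1 * g1 (x.1, 2 * G x.1 - x.2) + c2 * g2 (x.1, 2 * G x.1 - x.2) := by
            have hBp : (2:ℝ) ^ p * B ^ p
                = (4 ^ p * η₀ ^ p) * |pd2 φ (x.1, 2 * G x.1 - x.2)| ^ p := by
              rw [hB, Real.mul_rpow (by positivity) (abs_nonneg _),
                Real.mul_rpow (by norm_num) (le_of_lt hη₀)]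
              have h4 : (4:ℝ) ^ p = 2 ^ p * 2 ^ p := by
                rw [← Real.mul_rpow (by norm_num) (by norm_num)]
                norm_num
              rw [h4]
              ring
            have e1 : (2:ℝ) ^ p * (A ^ p + B ^ p) = 2 ^ p * A ^ p + 2 ^ p * B ^ p := by ring
            rw [e1, ENNReal.ofReal_add (by positivity) (by positivity),
              ENNReal.ofReal_mul (by positivity), hBp,
              ENNReal.ofReal_mul (by positivity)]
    -- integrate the pointwise bound over U
    have hUbound : ∫⁻ x in U, ENNReal.ofReal (|D1P x| ^ p)
        ≤ c1 * (∫⁻ x in L, g1 x) + c2 * ∫⁻ x in L, g2 x := by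
      calc ∫⁻ x in U, ENNReal.ofReal (|D1P x| ^ p)
          ≤ ∫⁻ x in U, (c1 * g1 (x.1, 2 * G x.1 - x.2)
              + c2 * g2 (x.1, 2 * G x.1 - x.2)) := by
            refine lintegral_mono_ae ?_
            filter_upwards [ae_restrict_mem hUmeas] with x hx using hptwise x hx
        _ = (∫⁻ x in U, c1 * g1 (x.1, 2 * G x.1 - x.2))
              + ∫⁻ x in U, c2 * g2 (x.1, 2 * G x.1 - x.2) :=
            lintegral_add_left' (haem1.const_mul c1) _
        _ = c1 * (∫⁻ x in U, g1 (x.1, 2 * G x.1 - x.2))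
              + c2 * ∫⁻ x in U, g2 (x.1, 2 * G x.1 - x.2) := by
            rw [lintegral_const_mul' c1 _ ENNReal.ofReal_ne_top,
              lintegral_const_mul' c2 _ ENNReal.ofReal_ne_top]
        _ ≤ c1 * (∫⁻ x in L, g1 x) + c2 * ∫⁻ x in L, g2 x :=
            add_le_add (by gcongr) (by gcongr)
    rw [hsplit, lintegral_union hUmeas hdisj, hLval1]
    have hc1le : (1 : ENNReal) + c1 ≤ ENNReal.ofReal (4 ^ p) := by
      rw [hc1, ← ENNReal.ofReal_one, ← ENNReal.ofReal_add (by norm_num) (by positivity)]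
      apply ENNReal.ofReal_le_ofReal
      have h2p : (2:ℝ) ≤ 2 ^ p := by
        calc (2:ℝ) = 2 ^ (1:ℝ) := (Real.rpow_one 2).symm
          _ ≤ 2 ^ p := Real.rpow_le_rpow_of_exponent_le (by norm_num) hp
      have h4 : (4:ℝ) ^ p = 2 ^ p * 2 ^ p := by
        rw [← Real.mul_rpow (by norm_num) (by norm_num)]
        norm_num
      nlinarith [Real.rpow_nonneg (le_of_lt (by norm_num : (0:ℝ) < 2)) p]
    have hc2eq : c2 = ENNReal.ofReal (4 ^ p) * ENNReal.ofReal (η₀ ^ p) := by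
      rw [hc2, ENNReal.ofReal_mul (by positivity)]
    calc (∫⁻ x in L, g1 x) + ∫⁻ x in U, ENNReal.ofReal (|D1P x| ^ p)
        ≤ (∫⁻ x in L, g1 x) + (c1 * (∫⁻ x in L, g1 x) + c2 * ∫⁻ x in L, g2 x) :=
          add_le_add_right hUbound _
      _ = (1 + c1) * (∫⁻ x in L, g1 x) + c2 * ∫⁻ x in L, g2 x := by
          rw [add_mul, one_mul, add_assoc]
      _ ≤ ENNReal.ofReal (4 ^ p) * (∫⁻ x in L, g1 x)
            + ENNReal.ofReal (4 ^ p) * (ENNReal.ofReal (η₀ ^ p) * ∫⁻ x in L, g2 x) := by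
          refine add_le_add (by gcongr) ?_
          rw [hc2eq, mul_assoc]
      _ = ENNReal.ofReal (4 ^ p) * ((∫⁻ x in L, g1 x)
            + ENNReal.ofReal (η₀ ^ p) * ∫⁻ x in L, g2 x) := (mul_add _ _ _).symm
end

section
/- Let G₁ > 0 and let G : (0,1) → ℝ be measurable with 0 < G(x) ≤ G₁ for all x. Let Ω^G = {(x₁,x₂) ∈ ℝ² : x₁ ∈ (0,1), 0 < x₂ < G(x₁)}, and let u be a function on Ω^G such that for each x₁ the map x₂ ↦ u(x₁,x₂) is C¹ on (0, G(x₁)) with ∫_{Ω^G} (∂₂u)² dx < ∞. Then for every η > 0, ∫_{Ω^G} | u(x₁, x₂) − u(x₁, x₂/(1+η)) |² dx₁ dx₂ ≤ (η/(1+η)) G₁² ∫_{Ω^G} (∂₂u(x₁,x₂))² dx₁ dx₂. -/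
open MeasureTheory Set Filter Topology

/-- Partial derivative with respect to the second variable, taken fiberwise. -/
noncomputable def pd2fib (u : ℝ × ℝ → ℝ) (x : ℝ × ℝ) : ℝ := deriv (fun t => u (x.1, t)) x.2

/-- Cauchy–Schwarz on a set of finite measure: `(∫ f)² ≤ |s| ∫ f²`. -/
lemma cs_integral {s : Set ℝ} (hvol : volume s ≠ ⊤)
    {f : ℝ → ℝ} (hf : IntegrableOn f s) (hf2 : IntegrableOn (fun x => f x ^ 2) s) :
    (∫ x in s, f x) ^ 2 ≤ (volume s).toReal * ∫ x in s, f x ^ 2 := by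
  by_cases hz : volume s = 0
  · simp [Measure.restrict_eq_zero.mpr hz]
  set m := (volume s).toReal with hm
  have hmpos : 0 < m := ENNReal.toReal_pos hz hvol
  set I := ∫ x in s, f x with hI
  set J := ∫ x in s, f x ^ 2 with hJ
  set c := I / m with hc
  have key : 0 ≤ ∫ x in s, (f x - c) ^ 2 := integral_nonneg fun x => sq_nonneg _
  have h1 : IntegrableOn (fun x => f x ^ 2 - 2 * c * f x) s := hf2.sub (hf.const_mul _)
  have h2 : IntegrableOn (fun _ : ℝ => c ^ 2) s := integrableOn_const hvol
  have expand : ∫ x in s, (f x - c) ^ 2 = (J - 2 * c * I) + c ^ 2 * m := by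
    have e : (fun x => (f x - c) ^ 2) = fun x => (f x ^ 2 - 2 * c * f x) + c ^ 2 := by
      funext x; ring
    rw [e, integral_add h1 h2, integral_sub hf2 (hf.const_mul _), MeasureTheory.integral_const_mul,
      setIntegral_const, smul_eq_mul, measureReal_def]
    ring
  rw [expand] at key
  have : I = c * m := by rw [hc]; field_simp
  nlinarith [key, hmpos, sq_nonneg c]

/-- The one-dimensional (fiberwise) estimate. -/
lemma fiber_estimate (G₁ η g : ℝ) (hG₁ : 0 < G₁) (hη : 0 < η) (hg : 0 < g) (hgle : g ≤ G₁)
    (v : ℝ → ℝ) (hv : ContDiffOn ℝ 1 v (Ioo 0 g)) :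
    ∫⁻ t in Ioo 0 g, ENNReal.ofReal ((v t - v (t / (1 + η))) ^ 2)
      ≤ ENNReal.ofReal (η / (1 + η) * G₁ ^ 2) *
        ∫⁻ t in Ioo 0 g, ENNReal.ofReal ((deriv v t) ^ 2) := by
  have h1η : (0:ℝ) < 1 + η := by linarith
  set f : ℝ → ℝ := deriv v with hf
  have hc : 0 < η / (1 + η) * G₁ ^ 2 := by positivity
  by_cases htop : (∫⁻ t in Ioo 0 g, ENNReal.ofReal (f t ^ 2)) = ⊤
  · rw [htop, ENNReal.mul_top (by simpa using ENNReal.ofReal_pos.mpr hc |>.ne')]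
    exact le_top
  have hfc : ContinuousOn f (Ioo 0 g) :=
    hv.continuousOn_deriv_of_isOpen isOpen_Ioo le_rfl
  have hfmeas : Measurable f := measurable_deriv v
  have hint2 : IntegrableOn (fun t => f t ^ 2) (Ioo 0 g) := by
    refine ⟨(hfmeas.pow_const 2).aestronglyMeasurable, ?_⟩
    rw [hasFiniteIntegral_iff_ofReal (Eventually.of_forall fun t => sq_nonneg _)]
    exact lt_top_iff_ne_top.mpr htop
  set B := ∫ t in Ioo 0 g, f t ^ 2 with hB
  have hBnn : 0 ≤ B := integral_nonneg fun t => sq_nonneg _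
  have hpt : ∀ t ∈ Ioo 0 g, (v t - v (t / (1 + η))) ^ 2 ≤ η / (1 + η) * G₁ * B := by
    intro t ht
    obtain ⟨ht0, htg⟩ := ht
    set a := t / (1 + η) with ha
    have ha0 : 0 < a := div_pos ht0 h1η
    have hat : a < t := by
      rw [ha, div_lt_iff₀ h1η]; nlinarith
    have hsub : Icc a t ⊆ Ioo 0 g := fun x hx => ⟨lt_of_lt_of_le ha0 hx.1, lt_of_le_of_lt hx.2 htg⟩
    have hderiv : ∀ x ∈ uIcc a t, HasDerivAt v (f x) x := by
      intro x hx
      rw [uIcc_of_le hat.le] at hx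
      exact ((hv.contDiffAt (isOpen_Ioo.mem_nhds (hsub hx))).differentiableAt one_ne_zero).hasDerivAt
    have hfint : IntervalIntegrable f volume a t := by
      apply ContinuousOn.intervalIntegrable
      rw [uIcc_of_le hat.le]; exact hfc.mono hsub
    have hftc : ∫ s in a..t, f s = v t - v a :=
      intervalIntegral.integral_eq_sub_of_hasDerivAt hderiv hfint
    have hIoc : ∫ s in a..t, f s = ∫ s in Ioc a t, f s := intervalIntegral.integral_of_le hat.le
    have hIocsub : Ioc a t ⊆ Ioo 0 g := fun x hx => hsub ⟨hx.1.le, hx.2⟩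
    have hint2' : IntegrableOn (fun s => f s ^ 2) (Ioc a t) := hint2.mono_set hIocsub
    have hint1' : IntegrableOn f (Ioc a t) := hfint.1
    have hcs := cs_integral (s := Ioc a t) (by simp) hint1' hint2'
    have hvolIoc : (volume (Ioc a t)).toReal = t - a := by
      rw [Real.volume_Ioc, ENNReal.toReal_ofReal (by linarith)]
    have hmono : ∫ s in Ioc a t, f s ^ 2 ≤ B := by
      apply setIntegral_mono_set hint2 (Eventually.of_forall fun s => sq_nonneg _)
      exact HasSubset.Subset.eventuallyLE hIocsub
    have hta : t - a ≤ η / (1 + η) * G₁ := by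
      have hamul : a * (1 + η) = t := by rw [ha]; field_simp
      have : t - a = t * (η / (1 + η)) := by
        have e1 : t * (η / (1 + η)) = a * η := by rw [ha]; ring
        rw [e1]; linear_combination -hamul
      rw [this]
      calc t * (η / (1 + η)) ≤ G₁ * (η / (1 + η)) := by
            apply mul_le_mul_of_nonneg_right (by linarith) (by positivity)
        _ = η / (1 + η) * G₁ := by ring
    calc (v t - v a) ^ 2 = (∫ s in Ioc a t, f s) ^ 2 := by rw [← hIoc, hftc]
      _ ≤ (t - a) * ∫ s in Ioc a t, f s ^ 2 := by rw [← hvolIoc]; exact hcs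
      _ ≤ (η / (1 + η) * G₁) * B := by
          apply mul_le_mul hta hmono (integral_nonneg fun s => sq_nonneg _) (by positivity)
  have step1 : ∫⁻ t in Ioo 0 g, ENNReal.ofReal ((v t - v (t / (1 + η))) ^ 2)
      ≤ ∫⁻ t in Ioo 0 g, ENNReal.ofReal (η / (1 + η) * G₁ * B) := by
    apply setLIntegral_mono measurable_const
    intro t ht
    exact ENNReal.ofReal_le_ofReal (hpt t ht)
  have step2 : ∫⁻ t in Ioo 0 g, ENNReal.ofReal (η / (1 + η) * G₁ * B)
      = ENNReal.ofReal (η / (1 + η) * G₁ * B * g) := by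
    rw [setLIntegral_const, Real.volume_Ioo, sub_zero,
      ← ENNReal.ofReal_mul (by positivity)]
  have step3 : ENNReal.ofReal (η / (1 + η) * G₁ * B * g)
      ≤ ENNReal.ofReal (η / (1 + η) * G₁ ^ 2 * B) := by
    apply ENNReal.ofReal_le_ofReal
    have : η / (1 + η) * G₁ * B * g ≤ η / (1 + η) * G₁ * B * G₁ := by
      apply mul_le_mul_of_nonneg_left hgle (by positivity)
    nlinarith
  have hBrw : ENNReal.ofReal B = ∫⁻ t in Ioo 0 g, ENNReal.ofReal (f t ^ 2) :=
    ofReal_integral_eq_lintegral_ofReal hint2 (Eventually.of_forall fun t => sq_nonneg _)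
  calc ∫⁻ t in Ioo 0 g, ENNReal.ofReal ((v t - v (t / (1 + η))) ^ 2)
      ≤ ENNReal.ofReal (η / (1 + η) * G₁ ^ 2 * B) := le_trans step1 (step2 ▸ step3)
    _ = ENNReal.ofReal (η / (1 + η) * G₁ ^ 2) * ENNReal.ofReal B := by
        rw [← ENNReal.ofReal_mul (by positivity)]
    _ = _ := by rw [hBrw]

/-- Fubini for the region below the graph of `G` over `(0,1)`. -/
lemma fubini_region (G : ℝ → ℝ) (hG : Measurable G) (F : ℝ × ℝ → ENNReal) (hF : Measurable F) :
    ∫⁻ x in {x : ℝ × ℝ | x.1 ∈ Ioo (0:ℝ) 1 ∧ x.2 ∈ Ioo 0 (G x.1)}, F x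
      = ∫⁻ x₁ in Ioo (0:ℝ) 1, ∫⁻ x₂ in Ioo 0 (G x₁), F (x₁, x₂) := by
  set S := {x : ℝ × ℝ | x.1 ∈ Ioo (0:ℝ) 1 ∧ x.2 ∈ Ioo 0 (G x.1)} with hSdef
  have hS : MeasurableSet S :=
    measurableSet_regionBetween measurable_const hG measurableSet_Ioo
  rw [← lintegral_indicator hS _]
  rw [MeasureTheory.Measure.volume_eq_prod, lintegral_prod _ (hF.indicator hS).aemeasurable]
  rw [← lintegral_indicator (measurableSet_Ioo : MeasurableSet (Ioo (0:ℝ) 1)) _]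
  congr 1
  funext x₁
  by_cases h : x₁ ∈ Ioo (0:ℝ) 1
  · rw [indicator_of_mem h, ← lintegral_indicator measurableSet_Ioo _]
    congr 1
    funext x₂
    by_cases h2 : x₂ ∈ Ioo 0 (G x₁)
    · rw [indicator_of_mem h2, indicator_of_mem (show (x₁, x₂) ∈ S from ⟨h, h2⟩)]
    · rw [indicator_of_notMem h2, indicator_of_notMem (fun hx => h2 (hx.2))]
  · rw [indicator_of_notMem h]
    have : ∀ x₂ : ℝ, S.indicator F (x₁, x₂) = 0 := fun x₂ =>
      indicator_of_notMem (fun hx => h hx.1) F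
    simp [this]

/-- The indicator of the fiberwise derivative is (jointly) measurable, being a pointwise
limit of measurable difference quotients. -/
lemma measurable_indicator_pd2fib
    (G : ℝ → ℝ)
    (S : Set (ℝ × ℝ)) (hSdef : S = {x : ℝ × ℝ | x.1 ∈ Ioo (0:ℝ) 1 ∧ x.2 ∈ Ioo 0 (G x.1)})
    (hS : MeasurableSet S)
    (u : ℝ × ℝ → ℝ) (humeas : Measurable u)
    (hufib : ∀ x₁ ∈ Ioo (0:ℝ) 1, ContDiffOn ℝ 1 (fun t => u (x₁, t)) (Ioo 0 (G x₁))) :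
    Measurable (S.indicator (pd2fib u)) := by
  set g : ℕ → ℝ × ℝ → ℝ := fun n x =>
    S.indicator (fun y => (u (y.1, y.2 + 1 / (n + 1)) - u (y.1, y.2)) * (n + 1)) x with hg
  have hgmeas : ∀ n, Measurable (g n) := by
    intro n
    apply Measurable.indicator _ hS
    exact ((humeas.comp (measurable_fst.prodMk
      (measurable_snd.add_const _))).sub
      (humeas.comp (measurable_fst.prodMk measurable_snd))).mul_const _
  apply measurable_of_tendsto_metrizable hgmeas
  rw [tendsto_pi_nhds]
  intro x
  by_cases hx : x ∈ S
  · have hx' := hx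
    rw [hSdef] at hx'
    obtain ⟨hx1, hx2⟩ := hx'
    set v : ℝ → ℝ := fun t => u (x.1, t) with hv
    have hdiff : HasDerivAt v (pd2fib u x) x.2 := by
      have := ((hufib x.1 hx1).contDiffAt (isOpen_Ioo.mem_nhds hx2)).differentiableAt one_ne_zero
      exact this.hasDerivAt
    have hslope := hasDerivAt_iff_tendsto_slope.mp hdiff
    have hseq : Tendsto (fun n : ℕ => x.2 + 1 / (n + 1 : ℝ)) atTop (𝓝[≠] x.2) := by
      apply tendsto_nhdsWithin_of_tendsto_nhds_of_eventually_within
      · have h0 : Tendsto (fun n : ℕ => 1 / (n + 1 : ℝ)) atTop (𝓝 0) :=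
          tendsto_one_div_add_atTop_nhds_zero_nat
        have := h0.const_add x.2
        simpa using this
      · filter_upwards with n
        have : (0:ℝ) < 1 / (n + 1 : ℝ) := by positivity
        simp only [mem_compl_iff, mem_singleton_iff]
        intro h
        nlinarith [h]
    have hcomp := hslope.comp hseq
    have heq : ∀ n : ℕ, slope v x.2 (x.2 + 1 / (n + 1 : ℝ))
        = (u (x.1, x.2 + 1 / (n + 1 : ℝ)) - u (x.1, x.2)) * (n + 1 : ℝ) := by
      intro n
      have hne : (1 : ℝ) / (n + 1 : ℝ) ≠ 0 := by positivity
      have hden : x.2 + 1 / (n + 1 : ℝ) - x.2 = 1 / (n + 1 : ℝ) := by ring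
      rw [slope_def_field, hden, div_div_eq_mul_div, div_one]
    have : Tendsto (fun n : ℕ => (u (x.1, x.2 + 1 / (n + 1 : ℝ)) - u (x.1, x.2)) * (n + 1 : ℝ))
        atTop (𝓝 (pd2fib u x)) := by
      apply hcomp.congr
      intro n
      exact heq n
    rw [indicator_of_mem hx]
    apply this.congr
    intro n
    rw [hg]
    simp only
    rw [indicator_of_mem hx]
  · rw [indicator_of_notMem hx]
    apply tendsto_const_nhds.congr
    intro n
    rw [hg]; simp only; rw [indicator_of_notMem hx]

/-- **Key estimate of Lemma 4.3 of the paper**: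
`‖u − P_{1+η}u‖²_{L²(Ω^G)} ≤ (η/(1+η)) G₁² ‖∂₂u‖²_{L²(Ω^G)}`, where
`(P_{1+η}u)(x₁,x₂) = u(x₁, x₂/(1+η))` and
`Ω^G = {(x₁,x₂) : x₁ ∈ (0,1), 0 < x₂ < G(x₁)}` with `0 < G ≤ G₁`. -/
theorem vertical_shift_L2_estimate
    (G₁ : ℝ) (hG₁ : 0 < G₁)
    (G : ℝ → ℝ) (hGmeas : Measurable G)
    (hGpos : ∀ x ∈ Ioo (0:ℝ) 1, 0 < G x) (hGub : ∀ x ∈ Ioo (0:ℝ) 1, G x ≤ G₁)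
    (ΩG : Set (ℝ × ℝ)) (hΩG : ΩG = {x : ℝ × ℝ | x.1 ∈ Ioo (0:ℝ) 1 ∧ x.2 ∈ Ioo 0 (G x.1)})
    (u : ℝ × ℝ → ℝ) (humeas : Measurable u)
    (hufib : ∀ x₁ ∈ Ioo (0:ℝ) 1, ContDiffOn ℝ 1 (fun t => u (x₁, t)) (Ioo 0 (G x₁)))
    (hfin : ∫⁻ x in ΩG, ENNReal.ofReal ((pd2fib u x) ^ 2) < ⊤)
    (η : ℝ) (hη : 0 < η) :
    ∫⁻ x in ΩG, ENNReal.ofReal ((u (x.1, x.2) - u (x.1, x.2 / (1 + η))) ^ 2)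
      ≤ ENNReal.ofReal (η / (1 + η) * G₁ ^ 2) *
        ∫⁻ x in ΩG, ENNReal.ofReal ((pd2fib u x) ^ 2) := by
  subst hΩG
  set S := {x : ℝ × ℝ | x.1 ∈ Ioo (0:ℝ) 1 ∧ x.2 ∈ Ioo 0 (G x.1)} with hSdef
  have hS : MeasurableSet S :=
    measurableSet_regionBetween measurable_const hGmeas measurableSet_Ioo
  set D := S.indicator (pd2fib u) with hD
  have hDmeas : Measurable D := measurable_indicator_pd2fib G S hSdef hS u humeas hufib
  -- replace pd2fib by its indicator version (they agree on S)
  have hRHS : ∫⁻ x in S, ENNReal.ofReal ((pd2fib u x) ^ 2)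
      = ∫⁻ x in S, ENNReal.ofReal ((D x) ^ 2) := by
    apply setLIntegral_congr_fun hS
    intro x hx; beta_reduce
    rw [hD, indicator_of_mem hx]
  -- measurable integrands
  have hF₁ : Measurable fun x : ℝ × ℝ =>
      ENNReal.ofReal ((u (x.1, x.2) - u (x.1, x.2 / (1 + η))) ^ 2) := by
    apply ENNReal.measurable_ofReal.comp
    apply Measurable.pow_const
    exact (humeas.comp (measurable_fst.prodMk measurable_snd)).sub
      (humeas.comp (measurable_fst.prodMk (measurable_snd.div_const _)))
  have hF₂ : Measurable fun x : ℝ × ℝ => ENNReal.ofReal ((D x) ^ 2) :=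
    ENNReal.measurable_ofReal.comp (hDmeas.pow_const 2)
  rw [hRHS]
  rw [fubini_region G hGmeas _ hF₁, fubini_region G hGmeas _ hF₂,
    ← lintegral_const_mul' _ _ ENNReal.ofReal_ne_top]
  apply setLIntegral_mono' measurableSet_Ioo
  intro x₁ hx₁
  -- on the fiber, D agrees with deriv of v
  have hfib : ∫⁻ x₂ in Ioo 0 (G x₁), ENNReal.ofReal ((D (x₁, x₂)) ^ 2)
      = ∫⁻ x₂ in Ioo 0 (G x₁),
          ENNReal.ofReal ((deriv (fun t => u (x₁, t)) x₂) ^ 2) := by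
    apply setLIntegral_congr_fun measurableSet_Ioo
    intro x₂ hx₂; beta_reduce
    have hmem : ((x₁ : ℝ), (x₂ : ℝ)) ∈ S := ⟨hx₁, hx₂⟩
    rw [hD, indicator_of_mem hmem]
    rfl
  rw [hfib]
  exact fiber_estimate G₁ η (G x₁) hG₁ hη (hGpos x₁ hx₁) (hGub x₁ hx₁)
    (fun t => u (x₁, t)) (hufib x₁ hx₁)
end

section
/- Let G₁ > 0, let G : (0,1) → ℝ be measurable with 0 < G(x) ≤ G₁ for all x, and let Ω^G = {(x₁,x₂) : x₁ ∈ (0,1), 0 < x₂ < G(x₁)}. Let u be a function on Ω^G such that for each x₁ the map x₂ ↦ u(x₁,x₂) is C¹ on (0, G(x₁)), with u, ∂₂u ∈ L²(Ω^G), let f ∈ L²(Ω^G) and η > 0. Then | ∫_{Ω^G} ( (1/(1+η)) u(x₁, x₂/(1+η)) − u(x₁,x₂) ) f(x₁,x₂) dx | ≤ (η/(1+η)) ‖f‖_{L²(Ω^G)} ‖u‖_{L²(Ω^G)} + (η^{1/2}/(1+η)^{3/2}) G₁ ‖f‖_{L²(Ω^G)} ‖∂₂u‖_{L²(Ω^G)}.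 -/
open MeasureTheory Set Filter Topology
open scoped ENNReal NNReal

/-- Cauchy–Schwarz for integrals. -/
lemma cs_int {α : Type*} [MeasurableSpace α] (μ : Measure α) (g h : α → ℝ)
    (hgm : AEStronglyMeasurable g μ) (hhm : AEStronglyMeasurable h μ)
    (hg : Integrable (fun a => g a ^ 2) μ) (hh : Integrable (fun a => h a ^ 2) μ) :
    |∫ a, g a * h a ∂μ| ≤ Real.sqrt (∫ a, g a ^ 2 ∂μ) * Real.sqrt (∫ a, h a ^ 2 ∂μ) := by
  have hpq : Real.HolderConjugate 2 2 := by constructor <;> norm_num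
  have h2 : ENNReal.ofReal (2:ℝ) = 2 := by norm_num
  have hg2 : MemLp g (ENNReal.ofReal (2:ℝ)) μ := by
    rw [h2]; exact (memLp_two_iff_integrable_sq hgm).2 hg
  have hh2 : MemLp h (ENNReal.ofReal (2:ℝ)) μ := by
    rw [h2]; exact (memLp_two_iff_integrable_sq hhm).2 hh
  have key := MeasureTheory.integral_mul_norm_le_Lp_mul_Lq hpq hg2 hh2
  have e1 : ∀ w : α → ℝ, (∫ a, ‖w a‖ ^ (2:ℝ) ∂μ) = ∫ a, w a ^ 2 ∂μ := by
    intro w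
    refine integral_congr_ae (Eventually.of_forall fun a => ?_)
    show ‖w a‖ ^ (2:ℝ) = w a ^ 2
    rw [show ((2:ℝ) = ((2:ℕ):ℝ)) by norm_num, Real.rpow_natCast, Real.norm_eq_abs, sq_abs]
  calc |∫ a, g a * h a ∂μ| ≤ ∫ a, ‖g a * h a‖ ∂μ := by
        rw [← Real.norm_eq_abs]; exact norm_integral_le_integral_norm _
    _ = ∫ a, ‖g a‖ * ‖h a‖ ∂μ := by simp [norm_mul]
    _ ≤ (∫ a, ‖g a‖ ^ (2:ℝ) ∂μ) ^ (1/(2:ℝ)) * (∫ a, ‖h a‖ ^ (2:ℝ) ∂μ) ^ (1/(2:ℝ)) := key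
    _ = Real.sqrt (∫ a, g a ^ 2 ∂μ) * Real.sqrt (∫ a, h a ^ 2 ∂μ) := by
        rw [e1 g, e1 h, Real.sqrt_eq_rpow, Real.sqrt_eq_rpow]

/-- product of two L² functions is integrable -/
lemma mul_int {α : Type*} [MeasurableSpace α] (μ : Measure α) (g h : α → ℝ)
    (hgm : AEStronglyMeasurable g μ) (hhm : AEStronglyMeasurable h μ)
    (hg : Integrable (fun a => g a ^ 2) μ) (hh : Integrable (fun a => h a ^ 2) μ) :
    Integrable (fun a => g a * h a) μ := by
  have hb : Integrable (fun a => (g a ^ 2 + h a ^ 2) / 2) μ := (hg.add hh).div_const 2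
  refine Integrable.mono' hb (hgm.mul hhm) ?_
  filter_upwards with a
  rw [Real.norm_eq_abs, abs_mul]
  nlinarith [sq_nonneg (|g a| - |h a|), abs_nonneg (g a), abs_nonneg (h a),
    sq_abs (g a), sq_abs (h a)]


lemma omega_measurable (G : ℝ → ℝ) (hG : Measurable G) :
    MeasurableSet {x : ℝ × ℝ | x.1 ∈ Ioo (0:ℝ) 1 ∧ x.2 ∈ Ioo 0 (G x.1)} := by
  have e : {x : ℝ × ℝ | x.1 ∈ Ioo (0:ℝ) 1 ∧ x.2 ∈ Ioo 0 (G x.1)}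
      = (Prod.fst ⁻¹' Ioo (0:ℝ) 1) ∩ ((Prod.snd ⁻¹' Ioi (0:ℝ)) ∩ {x : ℝ × ℝ | x.2 < G x.1}) := by
    ext x; simp [mem_Ioo, and_assoc]
  rw [e]
  exact (measurable_fst measurableSet_Ioo).inter
    ((measurable_snd measurableSet_Ioi).inter
      (measurableSet_lt measurable_snd (hG.comp measurable_fst)))

lemma lint_omega (G : ℝ → ℝ) (hG : Measurable G)
    (h : ℝ × ℝ → ℝ≥0∞) (hm : Measurable h) :
    ∫⁻ x in {x : ℝ × ℝ | x.1 ∈ Ioo (0:ℝ) 1 ∧ x.2 ∈ Ioo 0 (G x.1)}, h x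
      = ∫⁻ x₁ in Ioo (0:ℝ) 1, ∫⁻ x₂ in Ioo 0 (G x₁), h (x₁, x₂) := by
  set S := {x : ℝ × ℝ | x.1 ∈ Ioo (0:ℝ) 1 ∧ x.2 ∈ Ioo 0 (G x.1)} with hS
  have hSm : MeasurableSet S := omega_measurable G hG
  rw [← lintegral_indicator hSm]
  rw [MeasureTheory.Measure.volume_eq_prod]
  rw [MeasureTheory.lintegral_prod _ ((hm.indicator hSm).aemeasurable)]
  have e : ∀ x₁ : ℝ, (∫⁻ x₂, S.indicator h (x₁, x₂))
      = (Ioo (0:ℝ) 1).indicator (fun x₁ => ∫⁻ x₂ in Ioo 0 (G x₁), h (x₁, x₂)) x₁ := by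
    intro x₁
    by_cases hx₁ : x₁ ∈ Ioo (0:ℝ) 1
    · rw [indicator_of_mem hx₁, ← lintegral_indicator measurableSet_Ioo]
      refine lintegral_congr fun x₂ => ?_
      by_cases hx₂ : x₂ ∈ Ioo 0 (G x₁)
      · rw [indicator_of_mem hx₂, indicator_of_mem (by exact ⟨hx₁, hx₂⟩)]
      · rw [indicator_of_notMem hx₂, indicator_of_notMem (by
          intro hmem; exact hx₂ hmem.2)]
    · rw [indicator_of_notMem hx₁]
      have : ∀ x₂ : ℝ, S.indicator h (x₁, x₂) = 0 := by
        intro x₂; exact indicator_of_notMem (fun hmem => hx₁ hmem.1) _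
      simp [this]
  simp_rw [e]
  rw [lintegral_indicator measurableSet_Ioo]

lemma lint_omega_ae (G : ℝ → ℝ) (hG : Measurable G)
    (h : ℝ × ℝ → ℝ≥0∞)
    (hm : AEMeasurable h (volume.restrict {x : ℝ × ℝ | x.1 ∈ Ioo (0:ℝ) 1 ∧ x.2 ∈ Ioo 0 (G x.1)})) :
    ∫⁻ x in {x : ℝ × ℝ | x.1 ∈ Ioo (0:ℝ) 1 ∧ x.2 ∈ Ioo 0 (G x.1)}, h x
      = ∫⁻ x₁ in Ioo (0:ℝ) 1, ∫⁻ x₂ in Ioo 0 (G x₁), h (x₁, x₂) := by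
  set S := {x : ℝ × ℝ | x.1 ∈ Ioo (0:ℝ) 1 ∧ x.2 ∈ Ioo 0 (G x.1)} with hS
  obtain ⟨g, hgm, hge⟩ := hm
  have h1 : ∫⁻ x in S, h x = ∫⁻ x in S, g x := lintegral_congr_ae hge
  have h2 := lint_omega G hG g hgm
  have hae : ∀ᵐ x : ℝ × ℝ ∂(volume : Measure (ℝ × ℝ)), x ∈ S → h x = g x :=
    ae_imp_of_ae_restrict hge
  rw [MeasureTheory.Measure.volume_eq_prod] at hae
  have hae2 := MeasureTheory.Measure.ae_ae_of_ae_prod hae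
  rw [h1, h2]
  refine lintegral_congr_ae ?_
  filter_upwards [ae_restrict_of_ae hae2, ae_restrict_mem measurableSet_Ioo] with x₁ hx₁ hx₁mem
  refine lintegral_congr_ae ?_
  filter_upwards [ae_restrict_of_ae hx₁, ae_restrict_mem measurableSet_Ioo] with x₂ hx₂ hx₂mem
  exact (hx₂ ⟨hx₁mem, hx₂mem⟩).symm

lemma swap_bound (G₁ a Gx : ℝ) (hGx : 0 < Gx) (hGxG₁ : Gx ≤ G₁) (ha : 0 < a)
    (g : ℝ → ℝ≥0∞) (hgm : Measurable g) :
    ∫⁻ x₂ in Ioo 0 Gx, ∫⁻ t in Ioc (x₂/a) x₂, g t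
      ≤ ENNReal.ofReal G₁ * ∫⁻ t in Ioo 0 Gx, g t := by
  set k : ℝ → ℝ → ℝ≥0∞ := fun x₂ t => if x₂ ∈ Ioo (0:ℝ) Gx ∧ t ∈ Ioc (x₂/a) x₂ then g t else 0
    with hk
  have hmset : MeasurableSet {p : ℝ × ℝ | p.1 ∈ Ioo (0:ℝ) Gx ∧ p.2 ∈ Ioc (p.1/a) p.1} := by
    have e : {p : ℝ × ℝ | p.1 ∈ Ioo (0:ℝ) Gx ∧ p.2 ∈ Ioc (p.1/a) p.1}
        = (Prod.fst ⁻¹' Ioo (0:ℝ) Gx) ∩ ({p : ℝ × ℝ | p.1/a < p.2} ∩ {p : ℝ × ℝ | p.2 ≤ p.1}) := by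
      ext p; simp [mem_Ioo, mem_Ioc, and_assoc]
    rw [e]
    exact (measurable_fst measurableSet_Ioo).inter
      ((measurableSet_lt (measurable_fst.div_const a) measurable_snd).inter
        (measurableSet_le measurable_snd measurable_fst))
  have hmk : AEMeasurable (Function.uncurry k) ((volume : Measure ℝ).prod volume) := by
    refine Measurable.aemeasurable ?_
    have : Function.uncurry k = fun p : ℝ × ℝ =>
        if p ∈ {p : ℝ × ℝ | p.1 ∈ Ioo (0:ℝ) Gx ∧ p.2 ∈ Ioc (p.1/a) p.1} then g p.2 else 0 := rfl
    rw [this]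
    exact Measurable.ite hmset (hgm.comp measurable_snd) measurable_const
  have e1 : ∫⁻ x₂ in Ioo 0 Gx, ∫⁻ t in Ioc (x₂/a) x₂, g t = ∫⁻ x₂, ∫⁻ t, k x₂ t := by
    rw [← lintegral_indicator measurableSet_Ioo]
    refine lintegral_congr fun x₂ => ?_
    by_cases hx : x₂ ∈ Ioo (0:ℝ) Gx
    · rw [indicator_of_mem hx, ← lintegral_indicator measurableSet_Ioc]
      refine lintegral_congr fun t => ?_
      by_cases ht : t ∈ Ioc (x₂/a) x₂
      · rw [indicator_of_mem ht, hk]; simp [hx, ht]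
      · rw [indicator_of_notMem ht, hk]; simp [ht]
    · rw [indicator_of_notMem hx]
      symm
      have : ∀ t, k x₂ t = 0 := by intro t; rw [hk]; simp [hx]
      simp [this]
  have e2 : ∀ t, (∫⁻ x₂, k x₂ t)
      = g t * volume {x₂ : ℝ | x₂ ∈ Ioo 0 Gx ∧ t ∈ Ioc (x₂/a) x₂} := by
    intro t
    have hms : MeasurableSet {x₂ : ℝ | x₂ ∈ Ioo 0 Gx ∧ t ∈ Ioc (x₂/a) x₂} := by
      have e : {x₂ : ℝ | x₂ ∈ Ioo 0 Gx ∧ t ∈ Ioc (x₂/a) x₂}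
          = Ioo (0:ℝ) Gx ∩ (((fun x₂ : ℝ => x₂/a) ⁻¹' Iio t) ∩ Ici t) := by
        ext x₂; simp [mem_Ioo, mem_Ioc, mem_Ici, mem_Iio, and_assoc]
      rw [e]
      exact measurableSet_Ioo.inter
        (((measurable_id.div_const a) measurableSet_Iio).inter measurableSet_Ici)
    have : ∀ x₂, k x₂ t
        = ({x₂ : ℝ | x₂ ∈ Ioo 0 Gx ∧ t ∈ Ioc (x₂/a) x₂}).indicator (fun _ => g t) x₂ := by
      intro x₂
      show (if x₂ ∈ Ioo (0:ℝ) Gx ∧ t ∈ Ioc (x₂/a) x₂ then g t else 0) = _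
      by_cases hx : x₂ ∈ Ioo (0:ℝ) Gx ∧ t ∈ Ioc (x₂/a) x₂
      · rw [if_pos hx]
        exact (indicator_of_mem
          (show x₂ ∈ {x₂ : ℝ | x₂ ∈ Ioo 0 Gx ∧ t ∈ Ioc (x₂/a) x₂} from hx) (fun _ => g t)).symm
      · rw [if_neg hx]
        exact (indicator_of_notMem
          (show x₂ ∉ {x₂ : ℝ | x₂ ∈ Ioo 0 Gx ∧ t ∈ Ioc (x₂/a) x₂} from hx) (fun _ => g t)).symm
    simp_rw [this]
    rw [lintegral_indicator hms, setLIntegral_const]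
  calc ∫⁻ x₂ in Ioo 0 Gx, ∫⁻ t in Ioc (x₂/a) x₂, g t
      = ∫⁻ x₂, ∫⁻ t, k x₂ t := e1
    _ = ∫⁻ t, ∫⁻ x₂, k x₂ t := lintegral_lintegral_swap hmk
    _ ≤ ∫⁻ t, (Ioo (0:ℝ) Gx).indicator (fun t => ENNReal.ofReal G₁ * g t) t := by
        refine lintegral_mono fun t => ?_
        rw [e2 t]
        by_cases ht : t ∈ Ioo (0:ℝ) Gx
        · rw [indicator_of_mem ht]
          have hsub : {x₂ : ℝ | x₂ ∈ Ioo 0 Gx ∧ t ∈ Ioc (x₂/a) x₂} ⊆ Ico t Gx := by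
            intro x₂ hx₂
            exact ⟨hx₂.2.2, hx₂.1.2⟩
          calc g t * volume {x₂ : ℝ | x₂ ∈ Ioo 0 Gx ∧ t ∈ Ioc (x₂/a) x₂}
              ≤ g t * ENNReal.ofReal G₁ := by
                refine mul_le_mul_right ?_ _
                refine le_trans (measure_mono hsub) ?_
                rw [Real.volume_Ico]
                exact ENNReal.ofReal_le_ofReal (by linarith [ht.1])
            _ = ENNReal.ofReal G₁ * g t := mul_comm _ _
        · rw [indicator_of_notMem ht]
          have hempty : {x₂ : ℝ | x₂ ∈ Ioo 0 Gx ∧ t ∈ Ioc (x₂/a) x₂} = ∅ := by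
            ext x₂
            simp only [mem_setOf_eq, mem_empty_iff_false, iff_false, not_and]
            intro hx₂ hts
            exact ht ⟨lt_of_lt_of_le (div_pos hx₂.1 ha) (le_of_lt hts.1),
              lt_of_le_of_lt hts.2 hx₂.2⟩
          rw [hempty]
          simp
    _ = ENNReal.ofReal G₁ * ∫⁻ t in Ioo 0 Gx, g t := by
        rw [lintegral_indicator measurableSet_Ioo, lintegral_const_mul' _ _ ENNReal.ofReal_ne_top]


lemma cs_interval (g : ℝ → ℝ) (b c : ℝ) (hbc : b ≤ c)
    (hgm : AEStronglyMeasurable g (volume.restrict (Ioc b c)))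
    (hg : IntegrableOn (fun t => g t ^ 2) (Ioc b c)) :
    (∫ t in Ioc b c, g t) ^ 2 ≤ (c - b) * ∫ t in Ioc b c, g t ^ 2 := by
  have hone : Integrable (fun _ : ℝ => (1:ℝ) ^ 2) (volume.restrict (Ioc b c)) := by
    simp only [one_pow]; exact integrableOn_const measure_Ioc_lt_top.ne
  have hcs := cs_int (volume.restrict (Ioc b c)) g (fun _ => 1) hgm
    aestronglyMeasurable_const hg hone
  have h1 : ∫ a in Ioc b c, g a * (1:ℝ) = ∫ t in Ioc b c, g t := by simp
  have h2 : ∫ _a in Ioc b c, ((1:ℝ)) ^ 2 = c - b := by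
    simp only [one_pow]
    rw [setIntegral_const, Real.volume_real_Ioc, smul_eq_mul, mul_one,
      max_eq_left (by linarith)]
  rw [h1, h2] at hcs
  have hnn : 0 ≤ ∫ t in Ioc b c, g t ^ 2 := integral_nonneg fun t => sq_nonneg _
  calc (∫ t in Ioc b c, g t) ^ 2 = |∫ t in Ioc b c, g t| ^ 2 := (sq_abs _).symm
    _ ≤ (Real.sqrt (∫ t in Ioc b c, g t ^ 2) * Real.sqrt (c - b)) ^ 2 :=
        pow_le_pow_left₀ (abs_nonneg _) hcs 2
    _ = (∫ t in Ioc b c, g t ^ 2) * (c - b) := by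
        rw [mul_pow, Real.sq_sqrt hnn, Real.sq_sqrt (by linarith)]
    _ = (c - b) * _ := mul_comm _ _

lemma pointwise_bound (u : ℝ × ℝ → ℝ) (G : ℝ → ℝ) (η : ℝ) (hη : 0 < η)
    (x₁ : ℝ) (hufib : ContDiffOn ℝ 1 (fun t => u (x₁, t)) (Ioo 0 (G x₁)))
    (x₂ : ℝ) (hx₂ : x₂ ∈ Ioo 0 (G x₁)) :
    IntegrableOn (fun t => (pd2fib u (x₁, t)) ^ 2) (Ioc (x₂/(1+η)) x₂) ∧
      (u (x₁, x₂/(1+η)) - u (x₁, x₂)) ^ 2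
        ≤ (η * x₂ / (1+η)) * ∫ t in Ioc (x₂/(1+η)) x₂, (pd2fib u (x₁, t)) ^ 2 := by
  obtain ⟨hx₂0, hx₂G⟩ := hx₂
  have ha0 : (0:ℝ) < 1 + η := by linarith
  have hb0 : 0 < x₂ / (1+η) := div_pos hx₂0 ha0
  have hble : x₂ / (1+η) ≤ x₂ := by
    rw [div_le_iff₀ ha0]; nlinarith
  have hsub : Icc (x₂/(1+η)) x₂ ⊆ Ioo 0 (G x₁) :=
    fun t ht => ⟨lt_of_lt_of_le hb0 ht.1, lt_of_le_of_lt ht.2 hx₂G⟩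
  have hder : ∀ t ∈ Ioo 0 (G x₁), HasDerivAt (fun s => u (x₁, s)) (pd2fib u (x₁, t)) t := by
    intro t ht
    have hd := (hufib.differentiableOn one_ne_zero).differentiableAt (isOpen_Ioo.mem_nhds ht)
    exact hd.hasDerivAt
  have hcont : ContinuousOn (fun t => pd2fib u (x₁, t)) (Ioo 0 (G x₁)) :=
    hufib.continuousOn_deriv_of_isOpen isOpen_Ioo le_rfl
  have hInt : IntervalIntegrable (fun t => pd2fib u (x₁, t)) volume (x₂/(1+η)) x₂ :=
    ContinuousOn.intervalIntegrable (by rw [uIcc_of_le hble]; exact hcont.mono hsub)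
  have hftc : ∫ t in (x₂/(1+η))..x₂, pd2fib u (x₁, t) = u (x₁, x₂) - u (x₁, x₂/(1+η)) := by
    refine intervalIntegral.integral_eq_sub_of_hasDerivAt (f := fun s => u (x₁, s)) ?_ hInt
    intro t ht
    rw [uIcc_of_le hble] at ht
    exact hder t (hsub ht)
  have hiD2 : IntegrableOn (fun t => (pd2fib u (x₁, t)) ^ 2) (Ioc (x₂/(1+η)) x₂) := by
    have hc2 : ContinuousOn (fun t => (pd2fib u (x₁, t)) ^ 2) (Icc (x₂/(1+η)) x₂) :=
      (hcont.mono hsub).pow 2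
    exact (hc2.integrableOn_Icc).mono_set Ioc_subset_Icc_self
  refine ⟨hiD2, ?_⟩
  have hmeasD : AEStronglyMeasurable (fun t => pd2fib u (x₁, t))
      (volume.restrict (Ioc (x₂/(1+η)) x₂)) :=
    (measurable_deriv (fun s => u (x₁, s))).aestronglyMeasurable
  have hcs := cs_interval (fun t => pd2fib u (x₁, t)) (x₂/(1+η)) x₂ hble hmeasD hiD2
  have hIoc : ∫ t in (x₂/(1+η))..x₂, pd2fib u (x₁, t)
      = ∫ t in Ioc (x₂/(1+η)) x₂, pd2fib u (x₁, t) := intervalIntegral.integral_of_le hble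
  have hid : x₂ - x₂/(1+η) = η * x₂ / (1+η) := by field_simp; ring
  calc (u (x₁, x₂/(1+η)) - u (x₁, x₂)) ^ 2
      = (∫ t in Ioc (x₂/(1+η)) x₂, pd2fib u (x₁, t)) ^ 2 := by rw [← hIoc, hftc]; ring
    _ ≤ (x₂ - x₂/(1+η)) * ∫ t in Ioc (x₂/(1+η)) x₂, (pd2fib u (x₁, t)) ^ 2 := hcs
    _ = (η * x₂ / (1+η)) * ∫ t in Ioc (x₂/(1+η)) x₂, (pd2fib u (x₁, t)) ^ 2 := by rw [hid]

/-- **The estimate (4.10)/(EQINT) from the proof of Lemma 4.3 of the paper**: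
`|∫_{Ω^G} ((1/(1+η)) P_{1+η}u − u) f| ≤ (η/(1+η))‖f‖_{L²}‖u‖_{L²}
  + (η^{1/2}/(1+η)^{3/2}) G₁ ‖f‖_{L²}‖∂₂u‖_{L²}`,
where `(P_{1+η}u)(x₁,x₂) = u(x₁, x₂/(1+η))` and
`Ω^G = {(x₁,x₂) : x₁ ∈ (0,1), 0 < x₂ < G(x₁)}` with `0 < G ≤ G₁`. -/
theorem shifted_integral_estimate
    (G₁ : ℝ) (hG₁ : 0 < G₁)
    (G : ℝ → ℝ) (hGmeas : Measurable G)
    (hGpos : ∀ x ∈ Ioo (0:ℝ) 1, 0 < G x) (hGub : ∀ x ∈ Ioo (0:ℝ) 1, G x ≤ G₁)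
    (ΩG : Set (ℝ × ℝ)) (hΩG : ΩG = {x : ℝ × ℝ | x.1 ∈ Ioo (0:ℝ) 1 ∧ x.2 ∈ Ioo 0 (G x.1)})
    (u : ℝ × ℝ → ℝ) (humeas : Measurable u)
    (hufib : ∀ x₁ ∈ Ioo (0:ℝ) 1, ContDiffOn ℝ 1 (fun t => u (x₁, t)) (Ioo 0 (G x₁)))
    (huL2 : IntegrableOn (fun x => (u x) ^ 2) ΩG)
    (hd2L2 : IntegrableOn (fun x => (pd2fib u x) ^ 2) ΩG)
    (f : ℝ × ℝ → ℝ) (hfmeas : Measurable f)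
    (hfL2 : IntegrableOn (fun x => (f x) ^ 2) ΩG)
    (η : ℝ) (hη : 0 < η) :
    |∫ x in ΩG, ((1 / (1 + η)) * u (x.1, x.2 / (1 + η)) - u x) * f x|
      ≤ (η / (1 + η)) * Real.sqrt (∫ x in ΩG, (f x) ^ 2) * Real.sqrt (∫ x in ΩG, (u x) ^ 2)
        + (Real.sqrt η / (1 + η) ^ ((3:ℝ) / 2)) * G₁ *
          Real.sqrt (∫ x in ΩG, (f x) ^ 2) * Real.sqrt (∫ x in ΩG, (pd2fib u x) ^ 2) := by
  subst hΩG
  set S : Set (ℝ × ℝ) := {x : ℝ × ℝ | x.1 ∈ Ioo (0:ℝ) 1 ∧ x.2 ∈ Ioo 0 (G x.1)} with hS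
  have ha0 : (0:ℝ) < 1 + η := by linarith
  have hSm : MeasurableSet S := omega_measurable G hGmeas
  set F : ℝ × ℝ → ℝ := fun x => u (x.1, x.2 / (1 + η)) - u x with hF
  have hPu : Measurable (fun x : ℝ × ℝ => u (x.1, x.2 / (1 + η))) :=
    humeas.comp (measurable_fst.prodMk (measurable_snd.div_const _))
  have hFm : Measurable F := hPu.sub humeas
  have hDm_fiber : ∀ x₁ : ℝ, Measurable (fun t => ENNReal.ofReal ((pd2fib u (x₁, t)) ^ 2)) := by
    intro x₁
    exact ENNReal.measurable_ofReal.comp ((measurable_deriv (fun s => u (x₁, s))).pow_const 2)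
  have hDae : AEMeasurable (fun x => ENNReal.ofReal ((pd2fib u x) ^ 2)) (volume.restrict S) :=
    ENNReal.measurable_ofReal.comp_aemeasurable hd2L2.aestronglyMeasurable.aemeasurable
  have hDnn : 0 ≤ ∫ x in S, (pd2fib u x) ^ 2 := integral_nonneg fun x => sq_nonneg _
  have hDlint : ∫⁻ x in S, ENNReal.ofReal ((pd2fib u x) ^ 2)
      = ENNReal.ofReal (∫ x in S, (pd2fib u x) ^ 2) :=
    (MeasureTheory.ofReal_integral_eq_lintegral_ofReal hd2L2
      (Eventually.of_forall fun x => sq_nonneg _)).symm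
  have hbound : ∫⁻ x in S, ENNReal.ofReal (F x ^ 2)
      ≤ ENNReal.ofReal (η * G₁ / (1 + η)) * ENNReal.ofReal G₁
        * ENNReal.ofReal (∫ x in S, (pd2fib u x) ^ 2) := by
    rw [hS, lint_omega G hGmeas (fun x => ENNReal.ofReal (F x ^ 2))
      (ENNReal.measurable_ofReal.comp (hFm.pow_const 2))]
    have step1 : ∀ x₁ ∈ Ioo (0:ℝ) 1,
        ∫⁻ x₂ in Ioo 0 (G x₁), ENNReal.ofReal (F (x₁, x₂) ^ 2)
          ≤ ENNReal.ofReal (η * G₁ / (1 + η)) * ENNReal.ofReal G₁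
            * ∫⁻ t in Ioo 0 (G x₁), ENNReal.ofReal ((pd2fib u (x₁, t)) ^ 2) := by
      intro x₁ hx₁
      calc ∫⁻ x₂ in Ioo 0 (G x₁), ENNReal.ofReal (F (x₁, x₂) ^ 2)
          ≤ ∫⁻ x₂ in Ioo 0 (G x₁), ENNReal.ofReal (η * G₁ / (1 + η))
              * ∫⁻ t in Ioc (x₂/(1+η)) x₂, ENNReal.ofReal ((pd2fib u (x₁, t)) ^ 2) := by
            refine setLIntegral_mono' measurableSet_Ioo fun x₂ hx₂ => ?_
            obtain ⟨hiD2, hkey⟩ := pointwise_bound u G η hη x₁ (hufib x₁ hx₁) x₂ hx₂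
            calc ENNReal.ofReal (F (x₁, x₂) ^ 2)
                ≤ ENNReal.ofReal ((η * x₂ / (1+η))
                    * ∫ t in Ioc (x₂/(1+η)) x₂, (pd2fib u (x₁, t)) ^ 2) :=
                  ENNReal.ofReal_le_ofReal hkey
              _ = ENNReal.ofReal (η * x₂ / (1+η))
                    * ENNReal.ofReal (∫ t in Ioc (x₂/(1+η)) x₂, (pd2fib u (x₁, t)) ^ 2) :=
                  ENNReal.ofReal_mul (div_nonneg (mul_nonneg hη.le hx₂.1.le) ha0.le)
              _ = ENNReal.ofReal (η * x₂ / (1+η))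
                    * ∫⁻ t in Ioc (x₂/(1+η)) x₂, ENNReal.ofReal ((pd2fib u (x₁, t)) ^ 2) := by
                  rw [MeasureTheory.ofReal_integral_eq_lintegral_ofReal hiD2
                    (Eventually.of_forall fun t => sq_nonneg _)]
              _ ≤ ENNReal.ofReal (η * G₁ / (1+η))
                    * ∫⁻ t in Ioc (x₂/(1+η)) x₂, ENNReal.ofReal ((pd2fib u (x₁, t)) ^ 2) := by
                  refine mul_le_mul_left (ENNReal.ofReal_le_ofReal ?_) _
                  have hx₂G : x₂ ≤ G₁ := le_trans (le_of_lt hx₂.2) (hGub x₁ hx₁)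
                  have hx₂0 : 0 < x₂ := hx₂.1
                  gcongr
        _ = ENNReal.ofReal (η * G₁ / (1+η))
              * ∫⁻ x₂ in Ioo 0 (G x₁), ∫⁻ t in Ioc (x₂/(1+η)) x₂,
                  ENNReal.ofReal ((pd2fib u (x₁, t)) ^ 2) :=
            lintegral_const_mul' _ _ ENNReal.ofReal_ne_top
        _ ≤ ENNReal.ofReal (η * G₁ / (1+η)) * (ENNReal.ofReal G₁
              * ∫⁻ t in Ioo 0 (G x₁), ENNReal.ofReal ((pd2fib u (x₁, t)) ^ 2)) :=
            mul_le_mul_right (swap_bound G₁ (1+η) (G x₁) (hGpos x₁ hx₁) (hGub x₁ hx₁) ha0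
              _ (hDm_fiber x₁)) _
        _ = _ := by rw [mul_assoc]
    calc ∫⁻ x₁ in Ioo (0:ℝ) 1, ∫⁻ x₂ in Ioo 0 (G x₁), ENNReal.ofReal (F (x₁, x₂) ^ 2)
        ≤ ∫⁻ x₁ in Ioo (0:ℝ) 1, ENNReal.ofReal (η * G₁ / (1 + η)) * ENNReal.ofReal G₁
            * ∫⁻ t in Ioo 0 (G x₁), ENNReal.ofReal ((pd2fib u (x₁, t)) ^ 2) :=
          setLIntegral_mono' measurableSet_Ioo step1
      _ = ENNReal.ofReal (η * G₁ / (1 + η)) * ENNReal.ofReal G₁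
            * ∫⁻ x₁ in Ioo (0:ℝ) 1, ∫⁻ t in Ioo 0 (G x₁),
                ENNReal.ofReal ((pd2fib u (x₁, t)) ^ 2) :=
          lintegral_const_mul' _ _
            (ENNReal.mul_ne_top ENNReal.ofReal_ne_top ENNReal.ofReal_ne_top)
      _ = _ := by
          rw [← lint_omega_ae G hGmeas (fun x => ENNReal.ofReal ((pd2fib u x) ^ 2)) (hS ▸ hDae),
            ← hS, hDlint]
  have hFf2 : IntegrableOn (fun x => F x ^ 2) S := by
    refine ⟨(hFm.pow_const 2).aestronglyMeasurable, ?_⟩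
    rw [hasFiniteIntegral_iff_ofReal (Eventually.of_forall fun x => sq_nonneg _)]
    refine lt_of_le_of_lt hbound ?_
    exact ENNReal.mul_lt_top (ENNReal.mul_lt_top ENNReal.ofReal_lt_top ENNReal.ofReal_lt_top)
      ENNReal.ofReal_lt_top
  have hFint : ∫ x in S, F x ^ 2 ≤ (η * G₁ / (1 + η)) * G₁ * ∫ x in S, (pd2fib u x) ^ 2 := by
    rw [MeasureTheory.integral_eq_lintegral_of_nonneg_ae
      (Eventually.of_forall fun x => sq_nonneg _) (hFm.pow_const 2).aestronglyMeasurable]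
    have h1 := ENNReal.toReal_mono
      (ENNReal.mul_ne_top (ENNReal.mul_ne_top ENNReal.ofReal_ne_top ENNReal.ofReal_ne_top)
        ENNReal.ofReal_ne_top) hbound
    rw [ENNReal.toReal_mul, ENNReal.toReal_mul, ENNReal.toReal_ofReal (div_nonneg (mul_nonneg hη.le hG₁.le) ha0.le),
      ENNReal.toReal_ofReal hG₁.le, ENNReal.toReal_ofReal hDnn] at h1
    exact h1
  have hi1 : Integrable (fun x => F x * f x) (volume.restrict S) :=
    mul_int _ F f hFm.aestronglyMeasurable hfmeas.aestronglyMeasurable hFf2 hfL2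
  have hi2 : Integrable (fun x => u x * f x) (volume.restrict S) :=
    mul_int _ u f humeas.aestronglyMeasurable hfmeas.aestronglyMeasurable huL2 hfL2
  have hsplit : ∫ x in S, ((1 / (1 + η)) * u (x.1, x.2 / (1 + η)) - u x) * f x
      = (1/(1+η)) * (∫ x in S, F x * f x) - (η/(1+η)) * (∫ x in S, u x * f x) := by
    have e1 : ∫ x in S, ((1/(1+η)) * (F x * f x) - (η/(1+η)) * (u x * f x))
        = (1/(1+η)) * (∫ x in S, F x * f x) - (η/(1+η)) * (∫ x in S, u x * f x) := by
      rw [integral_sub (hi1.const_mul _) (hi2.const_mul _), integral_const_mul, integral_const_mul]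
    rw [← e1]
    refine integral_congr_ae (Eventually.of_forall fun x => ?_)
    show ((1 / (1 + η)) * u (x.1, x.2 / (1 + η)) - u x) * f x
      = (1/(1+η)) * (F x * f x) - (η/(1+η)) * (u x * f x)
    simp only [hF]
    field_simp
    ring
  have hcs1 := cs_int (volume.restrict S) F f hFm.aestronglyMeasurable
    hfmeas.aestronglyMeasurable hFf2 hfL2
  have hcs2 := cs_int (volume.restrict S) u f humeas.aestronglyMeasurable
    hfmeas.aestronglyMeasurable huL2 hfL2
  have hNf : (0:ℝ) ≤ Real.sqrt (∫ x in S, f x ^ 2) := Real.sqrt_nonneg _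
  have hNu : (0:ℝ) ≤ Real.sqrt (∫ x in S, u x ^ 2) := Real.sqrt_nonneg _
  have hNd : (0:ℝ) ≤ Real.sqrt (∫ x in S, (pd2fib u x) ^ 2) := Real.sqrt_nonneg _
  have hsF : Real.sqrt (∫ x in S, F x ^ 2)
      ≤ Real.sqrt (η / (1+η)) * G₁ * Real.sqrt (∫ x in S, (pd2fib u x) ^ 2) := by
    refine le_trans (Real.sqrt_le_sqrt hFint) ?_
    have he : (η * G₁ / (1 + η)) * G₁ * ∫ x in S, (pd2fib u x) ^ 2
        = (η / (1+η)) * (G₁^2 * ∫ x in S, (pd2fib u x) ^ 2) := by ring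
    rw [he, Real.sqrt_mul (div_nonneg hη.le ha0.le), Real.sqrt_mul (sq_nonneg G₁),
      Real.sqrt_sq hG₁.le]
    exact le_of_eq (by ring)
  have hcoef : (1/(1+η)) * Real.sqrt (η/(1+η)) = Real.sqrt η / (1+η) ^ ((3:ℝ)/2) := by
    have hsa : (0:ℝ) < Real.sqrt (1+η) := Real.sqrt_pos.2 ha0
    rw [Real.sqrt_div hη.le, show ((3:ℝ)/2) = 1 + 1/2 by norm_num, Real.rpow_add ha0,
      Real.rpow_one, ← Real.sqrt_eq_rpow]
    field_simp
  calc |∫ x in S, ((1 / (1 + η)) * u (x.1, x.2 / (1 + η)) - u x) * f x|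
      = |(1/(1+η)) * (∫ x in S, F x * f x) - (η/(1+η)) * (∫ x in S, u x * f x)| := by
        rw [hsplit]
    _ ≤ |(1/(1+η)) * (∫ x in S, F x * f x)| + |(η/(1+η)) * (∫ x in S, u x * f x)| :=
        abs_sub ((1/(1+η)) * ∫ x in S, F x * f x) ((η/(1+η)) * ∫ x in S, u x * f x)
    _ = (1/(1+η)) * |∫ x in S, F x * f x| + (η/(1+η)) * |∫ x in S, u x * f x| := by
        rw [abs_mul, abs_mul, abs_of_pos (div_pos one_pos ha0), abs_of_pos (div_pos hη ha0)]
    _ ≤ (1/(1+η)) * (Real.sqrt (∫ x in S, F x ^ 2) * Real.sqrt (∫ x in S, f x ^ 2))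
          + (η/(1+η)) * (Real.sqrt (∫ x in S, u x ^ 2) * Real.sqrt (∫ x in S, f x ^ 2)) :=
        add_le_add (mul_le_mul_of_nonneg_left hcs1 (div_pos one_pos ha0).le)
          (mul_le_mul_of_nonneg_left hcs2 (div_pos hη ha0).le)
    _ ≤ (1/(1+η)) * ((Real.sqrt (η/(1+η)) * G₁ * Real.sqrt (∫ x in S, (pd2fib u x) ^ 2))
            * Real.sqrt (∫ x in S, f x ^ 2))
          + (η/(1+η)) * (Real.sqrt (∫ x in S, u x ^ 2) * Real.sqrt (∫ x in S, f x ^ 2)) :=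
        add_le_add_left (mul_le_mul_of_nonneg_left
          (mul_le_mul_of_nonneg_right hsF hNf) (div_pos one_pos ha0).le) _
    _ = (η / (1 + η)) * Real.sqrt (∫ x in S, f x ^ 2) * Real.sqrt (∫ x in S, u x ^ 2)
          + (Real.sqrt η / (1 + η) ^ ((3:ℝ) / 2)) * G₁ *
            Real.sqrt (∫ x in S, f x ^ 2) * Real.sqrt (∫ x in S, (pd2fib u x) ^ 2) := by
        rw [← hcoef]; ring
end

section
/- Let L > 0, 0 < G₀ ≤ G₁, M > 0, and let A(M) be the set of C¹, L-periodic functions G : ℝ → ℝ with G₀ ≤ G ≤ G₁ and |G'| ≤ M. There exists a constant C > 0, depending only on G₀, G₁ and M, with the following property. For all G, Ĝ ∈ A(M), set F̂ = Ĝ/G and Y*(G) = {(z₁,z₂) : 0 < z₁ < L, 0 < z₂ < G(z₁)}, and for a C¹ function U on Y*(G) define the vector field B_F̂U(z₁,z₂) = ( F̂(z₁) ∂₁U − F̂'(z₁) z₂ ∂₂U , −F̂'(z₁) z₂ ∂₁U + (1/F̂(z₁)) (1 + (z₂ F̂'(z₁))²) ∂₂U ). Then for all C¹ functions U, V on Y*(G)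 with U, V, ∇U, ∇V ∈ L²(Y*(G)): | ∫_{Y*(G)} B_F̂U · ∇(V/F̂) dz − ∫_{Y*(G)} ∇U · ∇V dz | ≤ C ( sup|G − Ĝ| + sup|G' − Ĝ'| ) ‖U‖_H ‖V‖_H, where V/F̂ denotes the function (z₁,z₂) ↦ V(z₁,z₂)/F̂(z₁) and ‖W‖_H² = ∫_{Y*(G)} ( W² + |∇W|² ) dz. -/
open MeasureTheory Set Filter Topology

/-- The basic cell `Y*(G) = {(z₁,z₂) : 0 < z₁ < L, 0 < z₂ < G(z₁)}`. -/
def Ystar (L : ℝ) (G : ℝ → ℝ) : Set (ℝ × ℝ) :=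
  {z : ℝ × ℝ | z.1 ∈ Ioo 0 L ∧ z.2 ∈ Ioo 0 (G z.1)}

/-- The `H¹(Y*(G))` norm `‖W‖_H = (∫_{Y*(G)} (W² + |∇W|²))^{1/2}`. -/
noncomputable def Hnorm (L : ℝ) (G : ℝ → ℝ) (W : ℝ × ℝ → ℝ) : ℝ :=
  Real.sqrt (∫ z in Ystar L G, ((W z) ^ 2 + (pd1 W z) ^ 2 + (pd2 W z) ^ 2))

/-- Cauchy–Schwarz inequality for integrals of nonnegative functions. -/
lemma myCS {α : Type*} [MeasurableSpace α] {μ : Measure α} {f g : α → ℝ}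
    (hf : AEStronglyMeasurable f μ) (hg : AEStronglyMeasurable g μ)
    (hfn : ∀ x, 0 ≤ f x) (hgn : ∀ x, 0 ≤ g x)
    (hf2 : Integrable (fun x => f x ^ 2) μ) (hg2 : Integrable (fun x => g x ^ 2) μ) :
    ∫ x, f x * g x ∂μ ≤ Real.sqrt (∫ x, f x ^ 2 ∂μ) * Real.sqrt (∫ x, g x ^ 2 ∂μ) := by
  have hpq : Real.HolderConjugate 2 2 := Real.HolderConjugate.two_two
  have hfm : MemLp f 2 μ := (memLp_two_iff_integrable_sq hf).2 hf2
  have hgm : MemLp g 2 μ := (memLp_two_iff_integrable_sq hg).2 hg2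
  have h := integral_mul_le_Lp_mul_Lq_of_nonneg hpq
      (Filter.Eventually.of_forall hfn) (Filter.Eventually.of_forall hgn)
      (by simpa using hfm) (by simpa using hgm)
  have hrw : ∀ (h : α → ℝ), (∫ x, h x ^ (2:ℝ) ∂μ) = ∫ x, h x ^ 2 ∂μ := by
    intro h
    refine integral_congr_ae (Filter.Eventually.of_forall fun x => ?_)
    have := Real.rpow_natCast (h x) 2
    push_cast at this
    simp only [← this]
  rw [hrw f, hrw g] at h
  refine h.trans_eq ?_
  rw [Real.sqrt_eq_rpow, Real.sqrt_eq_rpow]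

/-- Partial derivatives of `V / (Fh ∘ fst)`. -/
lemma pdW (Fh : ℝ → ℝ) (hFh : ContDiff ℝ 1 Fh) {s : Set (ℝ×ℝ)} (hs : IsOpen s)
    {V : ℝ × ℝ → ℝ} (hV : ContDiffOn ℝ 1 V s) {z : ℝ × ℝ} (hz : z ∈ s) (hne : Fh z.1 ≠ 0) :
    pd1 (fun w => V w / Fh w.1) z
        = pd1 V z * (Fh z.1)⁻¹ + V z * (-(deriv Fh z.1) / (Fh z.1) ^ 2) ∧
      pd2 (fun w => V w / Fh w.1) z = pd2 V z * (Fh z.1)⁻¹ := by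
  have hVd : DifferentiableAt ℝ V z :=
    (hV.differentiableOn one_ne_zero).differentiableAt (hs.mem_nhds hz)
  have hg : HasDerivAt (fun x => (Fh x)⁻¹) (-(deriv Fh z.1) / (Fh z.1) ^ 2) z.1 :=
    ((hFh.differentiable one_ne_zero z.1).hasDerivAt).inv hne
  have hgf : HasFDerivAt (fun w : ℝ × ℝ => (Fh w.1)⁻¹)
      ((-(deriv Fh z.1) / (Fh z.1) ^ 2) • ContinuousLinearMap.fst ℝ ℝ ℝ) z :=
    hg.comp_hasFDerivAt z hasFDerivAt_fst
  have hW : HasFDerivAt (fun w => V w * (Fh w.1)⁻¹)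
      (V z • ((-(deriv Fh z.1) / (Fh z.1) ^ 2) • ContinuousLinearMap.fst ℝ ℝ ℝ)
        + (Fh z.1)⁻¹ • fderiv ℝ V z) z := hVd.hasFDerivAt.mul hgf
  have heq : (fun w => V w / Fh w.1) = fun w => V w * (Fh w.1)⁻¹ := by
    funext w; rw [div_eq_mul_inv]
  constructor
  · show fderiv ℝ (fun w => V w / Fh w.1) z (1, 0) = _
    rw [heq, hW.fderiv]
    simp [pd1]
    ring
  · show fderiv ℝ (fun w => V w / Fh w.1) z (0, 1) = _
    rw [heq, hW.fderiv]
    simp [pd2]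
    ring

lemma isOpen_Ystar {L : ℝ} {G : ℝ → ℝ} (hG : Continuous G) : IsOpen (Ystar L G) := by
  have h1 : IsOpen {z : ℝ × ℝ | 0 < z.1} := isOpen_lt continuous_const continuous_fst
  have h2 : IsOpen {z : ℝ × ℝ | z.1 < L} := isOpen_lt continuous_fst continuous_const
  have h3 : IsOpen {z : ℝ × ℝ | 0 < z.2} := isOpen_lt continuous_const continuous_snd
  have h4 : IsOpen {z : ℝ × ℝ | z.2 < G z.1} :=
    isOpen_lt continuous_snd (hG.comp continuous_fst)
  have he : Ystar L G
      = ({z : ℝ × ℝ | 0 < z.1} ∩ {z | z.1 < L}) ∩ ({z | 0 < z.2} ∩ {z | z.2 < G z.1}) := by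
    ext z; simp [Ystar, Set.mem_Ioo, and_assoc]
  rw [he]
  exact (h1.inter h2).inter (h3.inter h4)

/-- Product of two functions whose squares are integrable is integrable. -/
lemma mulIntegrable {α : Type*} [MeasurableSpace α] {μ : Measure α} {f g : α → ℝ}
    (hfm : AEStronglyMeasurable f μ) (hgm : AEStronglyMeasurable g μ)
    (hf2 : Integrable (fun z => f z ^ 2) μ) (hg2 : Integrable (fun z => g z ^ 2) μ) :
    Integrable (fun z => f z * g z) μ := by
  refine Integrable.mono' ((hf2.add hg2).div_const 2) (hfm.mul hgm)
    (Filter.Eventually.of_forall fun z => ?_)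
  rw [Real.norm_eq_abs, abs_mul]
  simp only [Pi.add_apply]
  nlinarith [sq_nonneg (|f z| - |g z|), abs_nonneg (f z), abs_nonneg (g z),
    sq_abs (f z), sq_abs (g z)]

set_option maxHeartbeats 2000000 in
/-- **The perturbation estimate (A.8)/(EK1) of the Appendix of the paper**: there is a
constant `C = C(G₀,G₁,M)` such that for all profiles `G, Ghat` in the admissible class
`A(M)` (C¹, `L`-periodic, `G₀ ≤ G ≤ G₁`, `|G'| ≤ M`), writing `Fhat = Ghat/G`, the
transported bilinear form `ρ_Ghat(U,V) = ∫_{Y*(G)} B_FhatU · ∇(V/Fhat)` differs from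
`ρ_G(U,V) = ∫_{Y*(G)} ∇U · ∇V` by at most
`C (sup|G−Ghat| + sup|G'−Ghat'|) ‖U‖_H ‖V‖_H`. -/
theorem bilinear_form_perturbation
    (L G₀ G₁ M : ℝ) (hL : 0 < L) (hG₀ : 0 < G₀) (hG₀₁ : G₀ ≤ G₁) (hM : 0 < M) :
    ∃ C : ℝ, 0 < C ∧ ∀ G Ghat : ℝ → ℝ,
      ContDiff ℝ 1 G → (∀ x, G (x + L) = G x) →
      (∀ x, G₀ ≤ G x) → (∀ x, G x ≤ G₁) → (∀ x, |deriv G x| ≤ M) →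
      ContDiff ℝ 1 Ghat → (∀ x, Ghat (x + L) = Ghat x) →
      (∀ x, G₀ ≤ Ghat x) → (∀ x, Ghat x ≤ G₁) → (∀ x, |deriv Ghat x| ≤ M) →
      ∀ Fhat : ℝ → ℝ, (∀ x, Fhat x = Ghat x / G x) →
      ∀ U V : ℝ × ℝ → ℝ,
        ContDiffOn ℝ 1 U (Ystar L G) → ContDiffOn ℝ 1 V (Ystar L G) →
        IntegrableOn (fun z => (U z) ^ 2) (Ystar L G) →
        IntegrableOn (fun z => (pd1 U z) ^ 2) (Ystar L G) →
        IntegrableOn (fun z => (pd2 U z) ^ 2) (Ystar L G) →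
        IntegrableOn (fun z => (V z) ^ 2) (Ystar L G) →
        IntegrableOn (fun z => (pd1 V z) ^ 2) (Ystar L G) →
        IntegrableOn (fun z => (pd2 V z) ^ 2) (Ystar L G) →
        |(∫ z in Ystar L G,
            ((Fhat z.1 * pd1 U z - deriv Fhat z.1 * z.2 * pd2 U z)
                * pd1 (fun w => V w / Fhat w.1) z
              + (-(deriv Fhat z.1 * z.2 * pd1 U z)
                  + (1 / Fhat z.1) * (1 + (z.2 * deriv Fhat z.1) ^ 2) * pd2 U z)
                * pd2 (fun w => V w / Fhat w.1) z))
          - ∫ z in Ystar L G, (pd1 U z * pd1 V z + pd2 U z * pd2 V z)|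
        ≤ C * ((⨆ x, |G x - Ghat x|) + ⨆ x, |deriv G x - deriv Ghat x|)
            * Hnorm L G U * Hnorm L G V := by
  have hG₁ : 0 < G₁ := lt_of_lt_of_le hG₀ hG₀₁
  set R : ℝ := G₁ / G₀ with hR
  set K₀ : ℝ := 2 * M * G₁ / G₀ ^ 2 with hK₀
  set K₁ : ℝ := max G₁ M / G₀ ^ 2 with hK₁
  have hRpos : 0 < R := div_pos hG₁ hG₀
  have hK₀pos : 0 < K₀ := by positivity
  have hK₁pos : 0 < K₁ := div_pos (lt_max_of_lt_left hG₁) (by positivity)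
  set K : ℝ := K₁ * R + K₁ * G₁ * R + K₀ * K₁ * G₁ * R ^ 2 + 2 * G₁ / G₀ ^ 2
      + K₀ * K₁ * G₁ ^ 2 * R ^ 2 + 1 with hK
  have hKpos : 0 < K := by
    have h1 : 0 ≤ K₁ * R := le_of_lt (mul_pos hK₁pos hRpos)
    have h2 : 0 ≤ K₁ * G₁ * R := by positivity
    have h3 : 0 ≤ K₀ * K₁ * G₁ * R ^ 2 := by positivity
    have h4 : 0 ≤ 2 * G₁ / G₀ ^ 2 := by positivity
    have h5 : 0 ≤ K₀ * K₁ * G₁ ^ 2 * R ^ 2 := by positivity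
    rw [hK]; linarith
  have t1 : 0 ≤ K₁ * R := le_of_lt (mul_pos hK₁pos hRpos)
  have t2 : 0 ≤ K₁ * G₁ * R := le_of_lt (mul_pos (mul_pos hK₁pos hG₁) hRpos)
  have t3 : 0 ≤ K₀ * K₁ * G₁ * R ^ 2 :=
    le_of_lt (mul_pos (mul_pos (mul_pos hK₀pos hK₁pos) hG₁) (pow_pos hRpos 2))
  have t4 : 0 ≤ 2 * G₁ / G₀ ^ 2 := le_of_lt (by
    apply div_pos (by linarith) (pow_pos hG₀ 2))
  have t5 : 0 ≤ K₀ * K₁ * G₁ ^ 2 * R ^ 2 :=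
    le_of_lt (mul_pos (mul_pos (mul_pos hK₀pos hK₁pos) (pow_pos hG₁ 2)) (pow_pos hRpos 2))
  refine ⟨3 * K, by linarith, ?_⟩
  intro G Ghat hGc hGper hG0 hG1 hGM hHc hHper hH0 hH1 hHM Fhat hFh U V hU hV
    iU0 iU1 iU2 iV0 iV1 iV2
  -- basic positivity
  have hGpos : ∀ x, 0 < G x := fun x => lt_of_lt_of_le hG₀ (hG0 x)
  have hHpos : ∀ x, 0 < Ghat x := fun x => lt_of_lt_of_le hG₀ (hH0 x)
  have hGne : ∀ x, G x ≠ 0 := fun x => (hGpos x).ne'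
  set s : Set (ℝ × ℝ) := Ystar L G with hs
  have hO : IsOpen s := isOpen_Ystar hGc.continuous
  have hMeas : MeasurableSet s := hO.measurableSet
  -- the sup quantities
  set δ₁ : ℝ := ⨆ x, |G x - Ghat x| with hδ₁
  set δ₂ : ℝ := ⨆ x, |deriv G x - deriv Ghat x| with hδ₂
  have bdd1 : BddAbove (Set.range fun x => |G x - Ghat x|) := by
    refine ⟨G₁ - G₀, ?_⟩
    rintro y ⟨x, rfl⟩
    exact abs_le.2 ⟨by linarith [hG0 x, hH1 x], by linarith [hG1 x, hH0 x]⟩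
  have bdd2 : BddAbove (Set.range fun x => |deriv G x - deriv Ghat x|) := by
    refine ⟨2 * M, ?_⟩
    rintro y ⟨x, rfl⟩
    calc |deriv G x - deriv Ghat x| ≤ |deriv G x| + |deriv Ghat x| := abs_sub _ _
      _ ≤ 2 * M := by linarith [hGM x, hHM x]
  have hd1 : ∀ x, |G x - Ghat x| ≤ δ₁ := fun x => le_ciSup bdd1 x
  have hd2 : ∀ x, |deriv G x - deriv Ghat x| ≤ δ₂ := fun x => le_ciSup bdd2 x
  have hδ₁0 : 0 ≤ δ₁ := le_trans (abs_nonneg _) (hd1 0)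
  have hδ₂0 : 0 ≤ δ₂ := le_trans (abs_nonneg _) (hd2 0)
  set δ : ℝ := δ₁ + δ₂ with hδ
  have hδ0 : 0 ≤ δ := by linarith
  -- facts about Fhat
  have hFeq : Fhat = fun x => Ghat x / G x := funext hFh
  have hFcd : ContDiff ℝ 1 Fhat := by rw [hFeq]; exact hHc.div hGc hGne
  have hFpos : ∀ x, 0 < Fhat x := fun x => by
    rw [hFh x]; exact div_pos (hHpos x) (hGpos x)
  have hFne : ∀ x, Fhat x ≠ 0 := fun x => (hFpos x).ne'
  have hFinv : ∀ x, (Fhat x)⁻¹ ≤ R := by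
    intro x
    rw [hFh x, inv_div, hR]
    exact div_le_div₀ (le_of_lt hG₁) (hG1 x) hG₀ (hH0 x)
  have hFinv0 : ∀ x, 0 ≤ (Fhat x)⁻¹ := fun x => le_of_lt (inv_pos.2 (hFpos x))
  have hF' : ∀ x, deriv Fhat x
      = (deriv Ghat x * G x - Ghat x * deriv G x) / (G x) ^ 2 := by
    intro x
    rw [hFeq]
    exact deriv_div (hHc.differentiable one_ne_zero x) (hGc.differentiable one_ne_zero x) (hGne x)
  have hnum1 : ∀ x, |deriv Ghat x * G x - Ghat x * deriv G x| ≤ max G₁ M * δ := by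
    intro x
    have he : deriv Ghat x * G x - Ghat x * deriv G x
        = (deriv Ghat x - deriv G x) * G x + deriv G x * (G x - Ghat x) := by ring
    rw [he]
    have h1 : |(deriv Ghat x - deriv G x) * G x| ≤ δ₂ * G₁ := by
      rw [abs_mul]
      exact mul_le_mul (by rw [abs_sub_comm]; exact hd2 x)
        (by rw [abs_of_pos (hGpos x)]; exact hG1 x) (abs_nonneg _) hδ₂0
    have h2 : |deriv G x * (G x - Ghat x)| ≤ M * δ₁ := by
      rw [abs_mul]
      exact mul_le_mul (hGM x) (hd1 x) (abs_nonneg _) (le_of_lt hM)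
    calc |(deriv Ghat x - deriv G x) * G x + deriv G x * (G x - Ghat x)|
        ≤ |(deriv Ghat x - deriv G x) * G x| + |deriv G x * (G x - Ghat x)| := abs_add_le _ _
      _ ≤ δ₂ * G₁ + M * δ₁ := by linarith
      _ ≤ max G₁ M * δ := by
          have e1 : δ₂ * G₁ ≤ δ₂ * max G₁ M :=
            mul_le_mul_of_nonneg_left (le_max_left _ _) hδ₂0
          have e2 : M * δ₁ ≤ max G₁ M * δ₁ :=
            mul_le_mul_of_nonneg_right (le_max_right _ _) hδ₁0
          rw [hδ]
          have e3 : max G₁ M * (δ₁ + δ₂) = max G₁ M * δ₁ + δ₂ * max G₁ M := by ring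
          linarith
  have hG2le : ∀ x, G₀ ^ 2 ≤ |(G x) ^ 2| := by
    intro x
    rw [abs_of_pos (pow_pos (hGpos x) 2)]
    exact pow_le_pow_left₀ (le_of_lt hG₀) (hG0 x) 2
  have hF'K₁ : ∀ x, |deriv Fhat x| ≤ K₁ * δ := by
    intro x
    rw [hF' x, abs_div]
    calc |deriv Ghat x * G x - Ghat x * deriv G x| / |(G x) ^ 2|
        ≤ (max G₁ M * δ) / G₀ ^ 2 := by
          apply div_le_div₀ (by positivity) (hnum1 x) (by positivity) (hG2le x)
      _ = K₁ * δ := by rw [hK₁]; ring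
  have hnum0 : ∀ x, |deriv Ghat x * G x - Ghat x * deriv G x| ≤ 2 * M * G₁ := by
    intro x
    calc |deriv Ghat x * G x - Ghat x * deriv G x|
        ≤ |deriv Ghat x * G x| + |Ghat x * deriv G x| := abs_sub _ _
      _ ≤ M * G₁ + G₁ * M := by
          rw [abs_mul, abs_mul]
          have e1 : |deriv Ghat x| * |G x| ≤ M * G₁ :=
            mul_le_mul (hHM x) (by rw [abs_of_pos (hGpos x)]; exact hG1 x)
              (abs_nonneg _) (le_of_lt hM)
          have e2 : |Ghat x| * |deriv G x| ≤ G₁ * M :=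
            mul_le_mul (by rw [abs_of_pos (hHpos x)]; exact hH1 x) (hGM x)
              (abs_nonneg _) (le_of_lt hG₁)
          linarith
      _ = 2 * M * G₁ := by ring
  have hF'K₀ : ∀ x, |deriv Fhat x| ≤ K₀ := by
    intro x
    rw [hF' x, abs_div]
    calc |deriv Ghat x * G x - Ghat x * deriv G x| / |(G x) ^ 2|
        ≤ (2 * M * G₁) / G₀ ^ 2 := by
          apply div_le_div₀ (by positivity) (hnum0 x) (by positivity) (hG2le x)
      _ = K₀ := by rw [hK₀]
  have h1a2 : ∀ x, |1 / (Fhat x) ^ 2 - 1| ≤ (2 * G₁ / G₀ ^ 2) * δ := by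
    intro x
    have he : 1 / (Fhat x) ^ 2 - 1
        = (G x - Ghat x) * (G x + Ghat x) / (Ghat x) ^ 2 := by
      have h1 : G x ≠ 0 := hGne x
      have h2 : Ghat x ≠ 0 := (hHpos x).ne'
      rw [hFh x]
      field_simp
      ring
    rw [he, abs_div, abs_mul]
    have hH2le : G₀ ^ 2 ≤ |(Ghat x) ^ 2| := by
      rw [abs_of_pos (pow_pos (hHpos x) 2)]
      exact pow_le_pow_left₀ (le_of_lt hG₀) (hH0 x) 2
    calc |G x - Ghat x| * |G x + Ghat x| / |(Ghat x) ^ 2|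
        ≤ (δ₁ * (2 * G₁)) / G₀ ^ 2 := by
          apply div_le_div₀ (by positivity)
            (mul_le_mul (hd1 x)
              (by rw [abs_of_pos (by linarith [hGpos x, hHpos x] : (0:ℝ) < G x + Ghat x)]
                  linarith [hG1 x, hH1 x])
              (abs_nonneg _) hδ₁0)
            (by positivity) hH2le
      _ ≤ (2 * G₁ / G₀ ^ 2) * δ := by
          rw [hδ]
          have : δ₁ * (2 * G₁) / G₀ ^ 2 = (2 * G₁ / G₀ ^ 2) * δ₁ := by ring
          rw [this]
          exact mul_le_mul_of_nonneg_left (by linarith) (by positivity)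
  -- the error term
  set E : ℝ × ℝ → ℝ := fun z =>
    -(deriv Fhat z.1 / Fhat z.1) * (pd1 U z * V z)
      - (deriv Fhat z.1 * z.2 / Fhat z.1) * (pd2 U z * pd1 V z + pd1 U z * pd2 V z)
      + ((deriv Fhat z.1) ^ 2 * z.2 / (Fhat z.1) ^ 2) * (pd2 U z * V z)
      + (1 / (Fhat z.1) ^ 2 - 1 + z.2 ^ 2 * (deriv Fhat z.1) ^ 2 / (Fhat z.1) ^ 2)
          * (pd2 U z * pd2 V z) with hE
  -- pointwise identity on s
  have hptid : ∀ z ∈ s,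
      ((Fhat z.1 * pd1 U z - deriv Fhat z.1 * z.2 * pd2 U z)
          * pd1 (fun w => V w / Fhat w.1) z
        + (-(deriv Fhat z.1 * z.2 * pd1 U z)
            + (1 / Fhat z.1) * (1 + (z.2 * deriv Fhat z.1) ^ 2) * pd2 U z)
          * pd2 (fun w => V w / Fhat w.1) z)
      = (pd1 U z * pd1 V z + pd2 U z * pd2 V z) + E z := by
    intro z hz
    obtain ⟨w1, w2⟩ := pdW Fhat hFcd hO hV hz (hFne z.1)
    have ha : Fhat z.1 ≠ 0 := hFne z.1
    rw [w1, w2, hE]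
    simp only []
    revert ha
    generalize Fhat z.1 = a
    generalize deriv Fhat z.1 = b
    generalize z.2 = t
    generalize pd1 U z = u1
    generalize pd2 U z = u2
    generalize V z = v
    generalize pd1 V z = v1
    generalize pd2 V z = v2
    intro ha
    field_simp
    ring
  -- measurability
  have hu1m : Measurable (pd1 U) := measurable_fderiv_apply_const ℝ U _
  have hu2m : Measurable (pd2 U) := measurable_fderiv_apply_const ℝ U _
  have hv1m : Measurable (pd1 V) := measurable_fderiv_apply_const ℝ V _
  have hv2m : Measurable (pd2 V) := measurable_fderiv_apply_const ℝ V _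
  have hUm : AEStronglyMeasurable U (volume.restrict s) :=
    hU.continuousOn.aestronglyMeasurable hMeas
  have hVm : AEStronglyMeasurable V (volume.restrict s) :=
    hV.continuousOn.aestronglyMeasurable hMeas
  have hFm : Continuous fun z : ℝ × ℝ => Fhat z.1 :=
    hFcd.continuous.comp continuous_fst
  have hF'm : Continuous fun z : ℝ × ℝ => deriv Fhat z.1 :=
    (hFcd.continuous_deriv le_rfl).comp continuous_fst
  have hEmeas : AEStronglyMeasurable E (volume.restrict s) := by
    have c1 : Continuous fun z : ℝ × ℝ => -(deriv Fhat z.1 / Fhat z.1) :=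
      (hF'm.div hFm fun z => hFne z.1).neg
    have c2 : Continuous fun z : ℝ × ℝ => deriv Fhat z.1 * z.2 / Fhat z.1 :=
      (hF'm.mul continuous_snd).div hFm fun z => hFne z.1
    have c3 : Continuous fun z : ℝ × ℝ => (deriv Fhat z.1) ^ 2 * z.2 / (Fhat z.1) ^ 2 :=
      ((hF'm.pow 2).mul continuous_snd).div (hFm.pow 2) fun z => pow_ne_zero 2 (hFne z.1)
    have c4 : Continuous fun z : ℝ × ℝ =>
        1 / (Fhat z.1) ^ 2 - 1 + z.2 ^ 2 * (deriv Fhat z.1) ^ 2 / (Fhat z.1) ^ 2 :=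
      ((continuous_const.div (hFm.pow 2) fun z => pow_ne_zero 2 (hFne z.1)).sub
        continuous_const).add
        (((continuous_snd.pow 2).mul (hF'm.pow 2)).div (hFm.pow 2)
          fun z => pow_ne_zero 2 (hFne z.1))
    exact ((((c1.aestronglyMeasurable).mul
      ((hu1m.aestronglyMeasurable).mul hVm)).sub
      ((c2.aestronglyMeasurable).mul
        (((hu2m.aestronglyMeasurable).mul (hv1m.aestronglyMeasurable)).add
          ((hu1m.aestronglyMeasurable).mul (hv2m.aestronglyMeasurable))))).add
      ((c3.aestronglyMeasurable).mul ((hu2m.aestronglyMeasurable).mul hVm))).add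
      ((c4.aestronglyMeasurable).mul
        ((hu2m.aestronglyMeasurable).mul (hv2m.aestronglyMeasurable)))
  -- P and Q
  set P : ℝ × ℝ → ℝ := fun z => |pd1 U z| + |pd2 U z| with hP
  set Q : ℝ × ℝ → ℝ := fun z => |V z| + |pd1 V z| + |pd2 V z| with hQ
  have hVabs : AEStronglyMeasurable (fun z => |V z|) (volume.restrict s) := by
    simpa [Real.norm_eq_abs] using hVm.norm
  have hPm : AEStronglyMeasurable P (volume.restrict s) :=
    ((hu1m.abs).aestronglyMeasurable).add ((hu2m.abs).aestronglyMeasurable)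
  have hQm : AEStronglyMeasurable Q (volume.restrict s) :=
    (hVabs.add ((hv1m.abs).aestronglyMeasurable)).add ((hv2m.abs).aestronglyMeasurable)
  have hPn : ∀ z, 0 ≤ P z := fun z => by
    rw [hP]; positivity
  have hQn : ∀ z, 0 ≤ Q z := fun z => by
    rw [hQ]; positivity
  have hP2int : Integrable (fun z => P z ^ 2) (volume.restrict s) := by
    have hPsq : AEStronglyMeasurable (fun z => P z ^ 2) (volume.restrict s) :=
      (hPm.mul hPm).congr (Filter.Eventually.of_forall fun z => (sq (P z)).symm)
    refine Integrable.mono' ((iU1.add iU2).const_mul 2) hPsq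
      (Filter.Eventually.of_forall fun z => ?_)
    · rw [Real.norm_eq_abs, abs_of_nonneg (sq_nonneg _)]
      simp only [Pi.add_apply, hP]
      nlinarith [sq_nonneg (|pd1 U z| - |pd2 U z|), sq_abs (pd1 U z), sq_abs (pd2 U z)]
  have hQ2int : Integrable (fun z => Q z ^ 2) (volume.restrict s) := by
    have hQsq : AEStronglyMeasurable (fun z => Q z ^ 2) (volume.restrict s) :=
      (hQm.mul hQm).congr (Filter.Eventually.of_forall fun z => (sq (Q z)).symm)
    refine Integrable.mono' (((iV0.add iV1).add iV2).const_mul 3) hQsq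
      (Filter.Eventually.of_forall fun z => ?_)
    · rw [Real.norm_eq_abs, abs_of_nonneg (sq_nonneg _)]
      simp only [Pi.add_apply, hQ]
      nlinarith [sq_nonneg (|V z| - |pd1 V z|), sq_nonneg (|V z| - |pd2 V z|),
        sq_nonneg (|pd1 V z| - |pd2 V z|), sq_abs (V z), sq_abs (pd1 V z), sq_abs (pd2 V z)]
  -- pointwise bound on E
  have hEbd : ∀ z ∈ s, |E z| ≤ K * δ * (P z * Q z) := by
    intro z hz
    have ht0 : 0 < z.2 := hz.2.1
    have ht1 : z.2 ≤ G₁ := le_trans (le_of_lt hz.2.2) (hG1 z.1)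
    set a : ℝ := Fhat z.1
    set b : ℝ := deriv Fhat z.1
    set t : ℝ := z.2
    have hapos : 0 < a := hFpos z.1
    have hainv : a⁻¹ ≤ R := hFinv z.1
    have hainv0 : 0 ≤ a⁻¹ := hFinv0 z.1
    have hb1 : |b| ≤ K₁ * δ := hF'K₁ z.1
    have hb0 : |b| ≤ K₀ := hF'K₀ z.1
    have hc4 : |1 / a ^ 2 - 1| ≤ 2 * G₁ / G₀ ^ 2 * δ := h1a2 z.1
    -- coefficient bounds, each by K * δ
    have hco1 : |b / a| ≤ K * δ := by
      rw [div_eq_mul_inv, abs_mul, abs_inv, abs_of_pos hapos]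
      calc |b| * a⁻¹ ≤ (K₁ * δ) * R :=
            mul_le_mul hb1 hainv hainv0 (mul_nonneg (le_of_lt hK₁pos) hδ0)
        _ = (K₁ * R) * δ := by ring
        _ ≤ K * δ := by
            apply mul_le_mul_of_nonneg_right _ hδ0
            rw [hK]; linarith
    have hco2 : |b * t / a| ≤ K * δ := by
      rw [div_eq_mul_inv, abs_mul, abs_mul, abs_inv, abs_of_pos hapos,
        abs_of_pos ht0]
      calc |b| * t * a⁻¹ ≤ (K₁ * δ) * G₁ * R := by
            apply mul_le_mul (mul_le_mul hb1 ht1 (le_of_lt ht0)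
                (mul_nonneg (le_of_lt hK₁pos) hδ0))
              hainv hainv0
              (mul_nonneg (mul_nonneg (le_of_lt hK₁pos) hδ0) (le_of_lt hG₁))
        _ = (K₁ * G₁ * R) * δ := by ring
        _ ≤ K * δ := by
            apply mul_le_mul_of_nonneg_right _ hδ0
            rw [hK]; linarith
    have hco3 : |b ^ 2 * t / a ^ 2| ≤ K * δ := by
      rw [div_eq_mul_inv, abs_mul, abs_mul, ← inv_pow, abs_pow, abs_pow, abs_inv,
        abs_of_pos hapos, abs_of_pos ht0]
      calc |b| ^ 2 * t * (a⁻¹) ^ 2 ≤ (K₀ * (K₁ * δ)) * G₁ * R ^ 2 := by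
            apply mul_le_mul _ (pow_le_pow_left₀ hainv0 hainv 2) (by positivity)
              (by positivity)
            apply mul_le_mul _ ht1 (le_of_lt ht0) (by positivity)
            calc |b| ^ 2 = |b| * |b| := sq |b|
              _ ≤ K₀ * (K₁ * δ) :=
                  mul_le_mul hb0 hb1 (abs_nonneg _) (le_of_lt hK₀pos)
        _ = (K₀ * K₁ * G₁ * R ^ 2) * δ := by ring
        _ ≤ K * δ := by
            apply mul_le_mul_of_nonneg_right _ hδ0
            rw [hK]; linarith
    have hco4 : |1 / a ^ 2 - 1 + t ^ 2 * b ^ 2 / a ^ 2| ≤ K * δ := by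
      have h2 : |t ^ 2 * b ^ 2 / a ^ 2| ≤ (K₀ * K₁ * G₁ ^ 2 * R ^ 2) * δ := by
        rw [div_eq_mul_inv, abs_mul, abs_mul, ← inv_pow, abs_pow, abs_pow, abs_pow,
          abs_inv, abs_of_pos hapos, abs_of_pos ht0]
        calc t ^ 2 * |b| ^ 2 * (a⁻¹) ^ 2 ≤ G₁ ^ 2 * (K₀ * (K₁ * δ)) * R ^ 2 := by
              apply mul_le_mul _ (pow_le_pow_left₀ hainv0 hainv 2) (by positivity)
                (by positivity)
              apply mul_le_mul (pow_le_pow_left₀ (le_of_lt ht0) ht1 2) _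
                (by positivity) (by positivity)
              calc |b| ^ 2 = |b| * |b| := sq |b|
                _ ≤ K₀ * (K₁ * δ) :=
                    mul_le_mul hb0 hb1 (abs_nonneg _) (le_of_lt hK₀pos)
          _ = (K₀ * K₁ * G₁ ^ 2 * R ^ 2) * δ := by ring
      calc |1 / a ^ 2 - 1 + t ^ 2 * b ^ 2 / a ^ 2|
          ≤ |1 / a ^ 2 - 1| + |t ^ 2 * b ^ 2 / a ^ 2| := abs_add_le _ _
        _ ≤ 2 * G₁ / G₀ ^ 2 * δ + (K₀ * K₁ * G₁ ^ 2 * R ^ 2) * δ := by linarith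
        _ = (2 * G₁ / G₀ ^ 2 + K₀ * K₁ * G₁ ^ 2 * R ^ 2) * δ := by ring
        _ ≤ K * δ := by
            apply mul_le_mul_of_nonneg_right _ hδ0
            rw [hK]; linarith
    -- assemble
    have habs : |E z| ≤ |b / a| * (|pd1 U z| * |V z|)
        + |b * t / a| * (|pd2 U z| * |pd1 V z| + |pd1 U z| * |pd2 V z|)
        + |b ^ 2 * t / a ^ 2| * (|pd2 U z| * |V z|)
        + |1 / a ^ 2 - 1 + t ^ 2 * b ^ 2 / a ^ 2| * (|pd2 U z| * |pd2 V z|) := by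
      rw [hE]
      have step : ∀ x1 x2 x3 x4 : ℝ, |x1 - x2 + x3 + x4| ≤ |x1| + |x2| + |x3| + |x4| := by
        intro x1 x2 x3 x4
        calc |x1 - x2 + x3 + x4| ≤ |x1 - x2 + x3| + |x4| := abs_add_le _ _
          _ ≤ (|x1 - x2| + |x3|) + |x4| := by linarith [abs_add_le (x1 - x2) x3]
          _ ≤ (|x1| + |x2| + |x3|) + |x4| := by linarith [abs_sub x1 x2]
          _ = |x1| + |x2| + |x3| + |x4| := by ring
      refine (step _ _ _ _).trans ?_
      have e1 : |(-(b / a)) * (pd1 U z * V z)| = |b / a| * (|pd1 U z| * |V z|) := by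
        rw [abs_mul, abs_neg, abs_mul]
      have e2 : |b * t / a * (pd2 U z * pd1 V z + pd1 U z * pd2 V z)|
          ≤ |b * t / a| * (|pd2 U z| * |pd1 V z| + |pd1 U z| * |pd2 V z|) := by
        rw [abs_mul]
        apply mul_le_mul_of_nonneg_left _ (abs_nonneg _)
        calc |pd2 U z * pd1 V z + pd1 U z * pd2 V z|
            ≤ |pd2 U z * pd1 V z| + |pd1 U z * pd2 V z| := abs_add_le _ _
          _ = |pd2 U z| * |pd1 V z| + |pd1 U z| * |pd2 V z| := by
              rw [abs_mul, abs_mul]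
      have e3 : |b ^ 2 * t / a ^ 2 * (pd2 U z * V z)|
          = |b ^ 2 * t / a ^ 2| * (|pd2 U z| * |V z|) := by rw [abs_mul, abs_mul]
      have e4 : |(1 / a ^ 2 - 1 + t ^ 2 * b ^ 2 / a ^ 2) * (pd2 U z * pd2 V z)|
          = |1 / a ^ 2 - 1 + t ^ 2 * b ^ 2 / a ^ 2| * (|pd2 U z| * |pd2 V z|) := by
        rw [abs_mul, abs_mul]
      linarith [e1, e2, e3, e4]
    have hfin : |b / a| * (|pd1 U z| * |V z|)
        + |b * t / a| * (|pd2 U z| * |pd1 V z| + |pd1 U z| * |pd2 V z|)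
        + |b ^ 2 * t / a ^ 2| * (|pd2 U z| * |V z|)
        + |1 / a ^ 2 - 1 + t ^ 2 * b ^ 2 / a ^ 2| * (|pd2 U z| * |pd2 V z|)
        ≤ K * δ * (P z * Q z) := by
      have n1 : (0:ℝ) ≤ |pd1 U z| * |V z| := by positivity
      have n2 : (0:ℝ) ≤ |pd2 U z| * |pd1 V z| + |pd1 U z| * |pd2 V z| := by positivity
      have n3 : (0:ℝ) ≤ |pd2 U z| * |V z| := by positivity
      have n4 : (0:ℝ) ≤ |pd2 U z| * |pd2 V z| := by positivity
      have hKδ : 0 ≤ K * δ := mul_nonneg (le_of_lt hKpos) hδ0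
      have expand : P z * Q z = |pd1 U z| * |V z| + |pd1 U z| * |pd1 V z|
          + |pd1 U z| * |pd2 V z| + |pd2 U z| * |V z| + |pd2 U z| * |pd1 V z|
          + |pd2 U z| * |pd2 V z| := by
        rw [hP, hQ]; ring
      have hle : |pd1 U z| * |V z| + (|pd2 U z| * |pd1 V z| + |pd1 U z| * |pd2 V z|)
          + |pd2 U z| * |V z| + |pd2 U z| * |pd2 V z| ≤ P z * Q z := by
        rw [expand]
        have : (0:ℝ) ≤ |pd1 U z| * |pd1 V z| :=
          mul_nonneg (abs_nonneg _) (abs_nonneg _)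
        linarith
      calc |b / a| * (|pd1 U z| * |V z|)
          + |b * t / a| * (|pd2 U z| * |pd1 V z| + |pd1 U z| * |pd2 V z|)
          + |b ^ 2 * t / a ^ 2| * (|pd2 U z| * |V z|)
          + |1 / a ^ 2 - 1 + t ^ 2 * b ^ 2 / a ^ 2| * (|pd2 U z| * |pd2 V z|)
          ≤ K * δ * (|pd1 U z| * |V z|)
            + K * δ * (|pd2 U z| * |pd1 V z| + |pd1 U z| * |pd2 V z|)
            + K * δ * (|pd2 U z| * |V z|)
            + K * δ * (|pd2 U z| * |pd2 V z|) := by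
            have q1 := mul_le_mul_of_nonneg_right hco1 n1
            have q2 := mul_le_mul_of_nonneg_right hco2 n2
            have q3 := mul_le_mul_of_nonneg_right hco3 n3
            have q4 := mul_le_mul_of_nonneg_right hco4 n4
            linarith
        _ = K * δ * (|pd1 U z| * |V z| + (|pd2 U z| * |pd1 V z| + |pd1 U z| * |pd2 V z|)
            + |pd2 U z| * |V z| + |pd2 U z| * |pd2 V z|) := by ring
        _ ≤ K * δ * (P z * Q z) := mul_le_mul_of_nonneg_left hle hKδ
    exact habs.trans hfin
  -- integrability of g and E
  have hgint : Integrable (fun z => pd1 U z * pd1 V z + pd2 U z * pd2 V z)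
      (volume.restrict s) :=
    (mulIntegrable (hu1m.aestronglyMeasurable) (hv1m.aestronglyMeasurable) iU1 iV1).add
      (mulIntegrable (hu2m.aestronglyMeasurable) (hv2m.aestronglyMeasurable) iU2 iV2)
  have hPQint : Integrable (fun z => P z * Q z) (volume.restrict s) :=
    mulIntegrable hPm hQm hP2int hQ2int
  have hEint : Integrable E (volume.restrict s) := by
    refine Integrable.mono' (hPQint.const_mul (K * δ)) hEmeas ?_
    rw [ae_restrict_iff' hMeas]
    exact Filter.Eventually.of_forall fun z hz => by
      rw [Real.norm_eq_abs]; exact hEbd z hz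
  -- split the integral
  have hsplit : (∫ z in s,
      ((Fhat z.1 * pd1 U z - deriv Fhat z.1 * z.2 * pd2 U z)
          * pd1 (fun w => V w / Fhat w.1) z
        + (-(deriv Fhat z.1 * z.2 * pd1 U z)
            + (1 / Fhat z.1) * (1 + (z.2 * deriv Fhat z.1) ^ 2) * pd2 U z)
          * pd2 (fun w => V w / Fhat w.1) z))
      = (∫ z in s, (pd1 U z * pd1 V z + pd2 U z * pd2 V z)) + ∫ z in s, E z := by
    rw [setIntegral_congr_fun hMeas hptid]
    exact integral_add hgint hEint
  rw [hsplit, add_sub_cancel_left]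
  -- bound |∫ E|
  have hIU0 : 0 ≤ ∫ z in s, ((U z) ^ 2 + (pd1 U z) ^ 2 + (pd2 U z) ^ 2) :=
    integral_nonneg fun z => by positivity
  have hIV0 : 0 ≤ ∫ z in s, ((V z) ^ 2 + (pd1 V z) ^ 2 + (pd2 V z) ^ 2) :=
    integral_nonneg fun z => by positivity
  have hsqP : Real.sqrt (∫ z in s, P z ^ 2) ≤ Real.sqrt 2 * Hnorm L G U := by
    have hmono : (∫ z in s, P z ^ 2)
        ≤ ∫ z in s, 2 * ((U z) ^ 2 + (pd1 U z) ^ 2 + (pd2 U z) ^ 2) := by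
      apply setIntegral_mono_on hP2int (((iU0.add iU1).add iU2).const_mul 2) hMeas
      intro z _
      simp only [hP, Pi.add_apply]
      nlinarith [sq_nonneg (|pd1 U z| - |pd2 U z|), sq_abs (pd1 U z), sq_abs (pd2 U z),
        sq_nonneg (U z)]
    have h2 : (∫ z in s, 2 * ((U z) ^ 2 + (pd1 U z) ^ 2 + (pd2 U z) ^ 2))
        = 2 * ∫ z in s, ((U z) ^ 2 + (pd1 U z) ^ 2 + (pd2 U z) ^ 2) :=
      integral_const_mul 2 _
    calc Real.sqrt (∫ z in s, P z ^ 2)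
        ≤ Real.sqrt (2 * ∫ z in s, ((U z) ^ 2 + (pd1 U z) ^ 2 + (pd2 U z) ^ 2)) := by
          apply Real.sqrt_le_sqrt; rw [← h2]; exact hmono
      _ = Real.sqrt 2 * Hnorm L G U := by
          rw [Real.sqrt_mul (by norm_num : (0:ℝ) ≤ 2)]
          rfl
  have hsqQ : Real.sqrt (∫ z in s, Q z ^ 2) ≤ Real.sqrt 3 * Hnorm L G V := by
    have hmono : (∫ z in s, Q z ^ 2)
        ≤ ∫ z in s, 3 * ((V z) ^ 2 + (pd1 V z) ^ 2 + (pd2 V z) ^ 2) := by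
      apply setIntegral_mono_on hQ2int (((iV0.add iV1).add iV2).const_mul 3) hMeas
      intro z _
      simp only [hQ, Pi.add_apply]
      nlinarith [sq_nonneg (|V z| - |pd1 V z|), sq_nonneg (|V z| - |pd2 V z|),
        sq_nonneg (|pd1 V z| - |pd2 V z|), sq_abs (V z), sq_abs (pd1 V z),
        sq_abs (pd2 V z)]
    have h2 : (∫ z in s, 3 * ((V z) ^ 2 + (pd1 V z) ^ 2 + (pd2 V z) ^ 2))
        = 3 * ∫ z in s, ((V z) ^ 2 + (pd1 V z) ^ 2 + (pd2 V z) ^ 2) :=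
      integral_const_mul 3 _
    calc Real.sqrt (∫ z in s, Q z ^ 2)
        ≤ Real.sqrt (3 * ∫ z in s, ((V z) ^ 2 + (pd1 V z) ^ 2 + (pd2 V z) ^ 2)) := by
          apply Real.sqrt_le_sqrt; rw [← h2]; exact hmono
      _ = Real.sqrt 3 * Hnorm L G V := by
          rw [Real.sqrt_mul (by norm_num : (0:ℝ) ≤ 3)]
          rfl
  have hCS : (∫ z in s, P z * Q z)
      ≤ Real.sqrt (∫ z in s, P z ^ 2) * Real.sqrt (∫ z in s, Q z ^ 2) :=
    myCS hPm hQm hPn hQn hP2int hQ2int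
  have hHU0 : 0 ≤ Hnorm L G U := Real.sqrt_nonneg _
  have hHV0 : 0 ≤ Hnorm L G V := Real.sqrt_nonneg _
  have hsqrtP0 : 0 ≤ Real.sqrt (∫ z in s, P z ^ 2) := Real.sqrt_nonneg _
  have hsqrtQ0 : 0 ≤ Real.sqrt (∫ z in s, Q z ^ 2) := Real.sqrt_nonneg _
  calc |∫ z in s, E z| ≤ ∫ z in s, |E z| := by
        rw [← Real.norm_eq_abs]
        exact (norm_integral_le_integral_norm E).trans_eq
          (by simp [Real.norm_eq_abs])
    _ ≤ ∫ z in s, K * δ * (P z * Q z) := by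
        apply setIntegral_mono_on hEint.abs (hPQint.const_mul (K * δ)) hMeas
        exact hEbd
    _ = K * δ * ∫ z in s, P z * Q z := integral_const_mul _ _
    _ ≤ K * δ * (Real.sqrt (∫ z in s, P z ^ 2) * Real.sqrt (∫ z in s, Q z ^ 2)) :=
        mul_le_mul_of_nonneg_left hCS (mul_nonneg (le_of_lt hKpos) hδ0)
    _ ≤ K * δ * ((Real.sqrt 2 * Hnorm L G U) * (Real.sqrt 3 * Hnorm L G V)) := by
        apply mul_le_mul_of_nonneg_left _ (mul_nonneg (le_of_lt hKpos) hδ0)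
        exact mul_le_mul hsqP hsqQ hsqrtQ0
          (mul_nonneg (Real.sqrt_nonneg 2) hHU0)
    _ ≤ 3 * K * δ * Hnorm L G U * Hnorm L G V := by
        have h6 : Real.sqrt 2 * Real.sqrt 3 ≤ 3 := by
          rw [← Real.sqrt_mul (by norm_num : (0:ℝ) ≤ 2)]
          rw [show (2:ℝ) * 3 = 6 by norm_num]
          rw [show (3:ℝ) = Real.sqrt 9 by
            rw [show (9:ℝ) = 3 ^ 2 by norm_num, Real.sqrt_sq (by norm_num : (0:ℝ) ≤ 3)]]
          exact Real.sqrt_le_sqrt (by norm_num)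
        have e : K * δ * ((Real.sqrt 2 * Hnorm L G U) * (Real.sqrt 3 * Hnorm L G V))
            = (Real.sqrt 2 * Real.sqrt 3) * (K * δ * Hnorm L G U * Hnorm L G V) := by
          ring
        rw [e]
        have : (Real.sqrt 2 * Real.sqrt 3) * (K * δ * Hnorm L G U * Hnorm L G V)
            ≤ 3 * (K * δ * Hnorm L G U * Hnorm L G V) :=
          mul_le_mul_of_nonneg_right h6
            (mul_nonneg (mul_nonneg (mul_nonneg (le_of_lt hKpos) hδ0) hHU0) hHV0)
        linarith [this]
    _ = 3 * K * (δ₁ + δ₂) * Hnorm L G U * Hnorm L G V := by rw [hδ]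
end
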